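/- arXiv:2302.02746 — 3 statements merged into one kernel-verified Lean document; each statement's English description precedes it below -/
import Mathlib

section
/- Let $F: \mathbb{R}^{n+1}_+ \to \mathbb{C}$ be measurable and $0 < p \le 2$. Define the vertical square function $\mathbb{V}F(x) := \big( \int_0^\infty |F(x,t)|^2 \, \frac{dt}{t} \big)^{1/2}$ and the conical square function $\mathbb{S}F(x) := \big( \iint_{|x-y|<t} |F(y,t)|^2 \, \frac{dy\,dt}{t^{n+1}} \big)^{1/2}$. Then $\| \mathbb{V}F \|_{L^p(\mathbb{R}^n)} \le C(n,p) \| \mathbb{S}F \|_{L^p(\mathbb{R}^n)}$. -/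
open MeasureTheory ENNReal Set Metric

/-- Vertical square function. -/
noncomputable def vertSq (n : ℕ) (F : (Fin n → ℝ) → ℝ → ℂ) (x : Fin n → ℝ) : ℝ≥0∞ :=
  (∫⁻ t in Set.Ioi (0 : ℝ), (‖F x t‖₊ : ℝ≥0∞) ^ 2 / ENNReal.ofReal t) ^ ((1 : ℝ) / 2)

/-- Conical square function. -/
noncomputable def conSq (n : ℕ) (F : (Fin n → ℝ) → ℝ → ℂ) (x : Fin n → ℝ) : ℝ≥0∞ :=
  (∫⁻ p in {p : (Fin n → ℝ) × ℝ | dist x p.1 < p.2},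
      (‖F p.1 p.2‖₊ : ℝ≥0∞) ^ 2 / ENNReal.ofReal (p.2 ^ (n + 1))) ^ ((1 : ℝ) / 2)

lemma aux_int_top (p : ℝ) (hp : 0 < p) :
    ∫⁻ t in Set.Ioi (1:ℝ), ENNReal.ofReal (t ^ (p-1)) = ⊤ := by
  have hni : ¬ IntegrableOn (fun t : ℝ => t ^ (p-1)) (Set.Ioi 1) := by
    rw [integrableOn_Ioi_rpow_iff one_pos]; linarith
  by_contra h
  apply hni
  have hm : Measurable fun t : ℝ => t ^ (p-1) := by fun_prop
  refine ⟨hm.aestronglyMeasurable.restrict, ?_⟩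
  rw [hasFiniteIntegral_iff_ofReal ?_]
  · exact lt_top_iff_ne_top.2 h
  · filter_upwards [ae_restrict_mem measurableSet_Ioi] with t ht
    have : (0:ℝ) < t := lt_trans one_pos ht
    positivity

lemma aux_layercake {α : Type*} [MeasurableSpace α] (μ : Measure α) (f : α → ℝ≥0∞)
    (hf : Measurable f) {p : ℝ} (hp : 0 < p) :
    ∫⁻ x, f x ^ p ∂μ =
      ENNReal.ofReal p *
        ∫⁻ t in Set.Ioi (0:ℝ), μ {x | ENNReal.ofReal t < f x} * ENNReal.ofReal (t ^ (p-1)) := by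
  by_cases htop : μ {x | f x = ⊤} = 0
  · have hae : ∀ᵐ x ∂μ, f x ≠ ⊤ := by
      rw [ae_iff]; simpa using htop
    set g : α → ℝ := fun x => (f x).toReal with hgdef
    have hgnn : 0 ≤ᵐ[μ] g := Filter.Eventually.of_forall fun x => ENNReal.toReal_nonneg
    have hg : AEMeasurable g μ := hf.ennreal_toReal.aemeasurable
    have h1 : ∫⁻ x, f x ^ p ∂μ = ∫⁻ x, ENNReal.ofReal (g x ^ p) ∂μ := by
      refine lintegral_congr_ae ?_
      filter_upwards [hae] with x hx
      rcases eq_or_ne (f x) 0 with h0 | h0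
      · simp [hgdef, h0, Real.zero_rpow hp.ne', ENNReal.zero_rpow_of_pos hp]
      · rw [hgdef, ← ENNReal.ofReal_rpow_of_pos (ENNReal.toReal_pos h0 hx),
          ENNReal.ofReal_toReal hx]
    rw [h1, lintegral_rpow_eq_lintegral_meas_lt_mul μ hgnn hg hp]
    congr 1
    refine lintegral_congr_ae ?_
    filter_upwards [ae_restrict_mem measurableSet_Ioi] with t ht
    congr 1
    refine measure_congr ?_
    filter_upwards [hae] with x hx
    have : (t < g x) = (ENNReal.ofReal t < f x) := by
      rw [eq_iff_iff, hgdef]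
      exact (ENNReal.ofReal_lt_iff_lt_toReal (le_of_lt ht) hx).symm
    exact this
  · have hpos : 0 < μ {x | f x = ⊤} := pos_iff_ne_zero.2 htop
    have hL : ∫⁻ x, f x ^ p ∂μ = ⊤ := by
      have hms : MeasurableSet {x | f x = ⊤} := hf (measurableSet_singleton ⊤)
      have h1 : ∫⁻ x in {x | f x = ⊤}, f x ^ p ∂μ = ⊤ := by
        have : ∫⁻ x in {x | f x = ⊤}, f x ^ p ∂μ = ∫⁻ _ in {x | f x = ⊤}, ⊤ ∂μ := by
          refine setLIntegral_congr_fun hms (fun x hx => ?_)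
          rw [Set.mem_setOf_eq.mp hx, ENNReal.top_rpow_of_pos hp]
        rw [this, setLIntegral_const, ENNReal.top_mul htop]
      exact top_le_iff.1 (h1 ▸ setLIntegral_le_lintegral _ _)
    have hR : ∫⁻ t in Set.Ioi (0:ℝ), μ {x | ENNReal.ofReal t < f x} * ENNReal.ofReal (t ^ (p-1)) = ⊤ := by
      refine top_le_iff.1 ?_
      calc (⊤:ℝ≥0∞) = μ {x | f x = ⊤} * ∫⁻ t in Set.Ioi (1:ℝ), ENNReal.ofReal (t ^ (p-1)) := by
            rw [aux_int_top p hp, ENNReal.mul_top htop]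
        _ = ∫⁻ t in Set.Ioi (1:ℝ), μ {x | f x = ⊤} * ENNReal.ofReal (t ^ (p-1)) := by
            rw [lintegral_const_mul _ (by fun_prop)]
        _ ≤ ∫⁻ t in Set.Ioi (1:ℝ), μ {x | ENNReal.ofReal t < f x} * ENNReal.ofReal (t ^ (p-1)) := by
            refine lintegral_mono fun t => ?_
            have hsub : {x | f x = ⊤} ⊆ {x | ENNReal.ofReal t < f x} := fun x hx => by
              simp only [Set.mem_setOf_eq] at hx ⊢
              rw [hx]; exact ENNReal.ofReal_lt_top
            exact mul_le_mul_left (measure_mono hsub) _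
        _ ≤ _ := lintegral_mono_set (Set.Ioi_subset_Ioi zero_le_one)
    rw [hL, hR, ENNReal.mul_top (by simp [hp])]

lemma aux_maximal (n : ℕ) (hn : 0 < n) (E : Set (Fin n → ℝ)) (hE : MeasurableSet E) :
    volume {z : Fin n → ℝ | ¬ ∀ t : ℝ, 0 < t →
        volume (ball z t) ≤ 2 * volume (E ∩ ball z t)}
      ≤ ENNReal.ofReal (2 * 4^n) * volume Eᶜ := by
  classical
  haveI : Nontrivial (Fin n → ℝ) :=
    ⟨0, fun _ => 1, fun h => by simpa using congrFun h ⟨0, hn⟩⟩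
  set μ := (volume : Measure (Fin n → ℝ)) with hμ
  have hfr : Module.finrank ℝ (Fin n → ℝ) = n := Module.finrank_fin_fun ℝ
  set c := μ (ball (0 : Fin n → ℝ) 1) with hc
  have hc0 : 0 < c := measure_ball_pos μ _ one_pos
  have hcT : c ≠ ⊤ := measure_ball_lt_top.ne
  set B := {z : Fin n → ℝ | ¬ ∀ t : ℝ, 0 < t →
      μ (ball z t) ≤ 2 * μ (E ∩ ball z t)} with hB
  by_cases hEc : μ Eᶜ = ⊤
  · rw [hEc, ENNReal.mul_top (by positivity)]; exact le_top
  set R : ℝ := max 1 ((2 * μ Eᶜ / c).toReal) with hR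
  have key : ∀ z ∈ B, ∃ t : ℝ, 0 < t ∧ μ (ball z t) ≤ 2 * μ (Eᶜ ∩ ball z t) ∧ t ≤ R := by
    intro z hz
    rw [hB, Set.mem_setOf_eq] at hz
    push_neg at hz
    obtain ⟨t, ht0, htlt⟩ := hz
    have hballT : μ (ball z t) < ⊤ := measure_ball_lt_top
    have h1 : μ (ball z t) ≤ 2 * μ (Eᶜ ∩ ball z t) := by
      by_contra hcon
      push_neg at hcon
      have hsplit : μ (ball z t) ≤ μ (E ∩ ball z t) + μ (Eᶜ ∩ ball z t) := by
        refine le_trans (measure_mono ?_) (measure_union_le _ _)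
        intro y hy
        by_cases hyE : y ∈ E
        · exact Or.inl ⟨hyE, hy⟩
        · exact Or.inr ⟨hyE, hy⟩
      have h2 : μ (ball z t) + μ (ball z t)
          ≤ 2 * μ (E ∩ ball z t) + 2 * μ (Eᶜ ∩ ball z t) := by
        calc μ (ball z t) + μ (ball z t)
            ≤ (μ (E ∩ ball z t) + μ (Eᶜ ∩ ball z t))
              + (μ (E ∩ ball z t) + μ (Eᶜ ∩ ball z t)) := add_le_add hsplit hsplit
          _ = 2 * μ (E ∩ ball z t) + 2 * μ (Eᶜ ∩ ball z t) := by ring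
      exact absurd (lt_of_le_of_lt h2 (ENNReal.add_lt_add htlt hcon)) (lt_irrefl _)
    refine ⟨t, ht0, h1, ?_⟩
    have hball : μ (ball z t) = ENNReal.ofReal (t ^ n) * c := by
      rw [hc, hμ, Measure.addHaar_ball _ _ ht0.le, hfr]
    rcases le_or_gt t 1 with h | h
    · exact le_trans h (le_max_left _ _)
    · have htn : t ≤ t ^ n := le_self_pow₀ h.le hn.ne'
      have h2 : ENNReal.ofReal t * c ≤ 2 * μ Eᶜ := by
        calc ENNReal.ofReal t * c ≤ ENNReal.ofReal (t ^ n) * c :=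
              mul_le_mul_left (ENNReal.ofReal_le_ofReal htn) c
          _ = μ (ball z t) := hball.symm
          _ ≤ 2 * μ (Eᶜ ∩ ball z t) := h1
          _ ≤ 2 * μ Eᶜ := by gcongr; exact Set.inter_subset_left
      have h3 : ENNReal.ofReal t ≤ 2 * μ Eᶜ / c := ENNReal.le_div_iff_mul_le
        (Or.inl hc0.ne') (Or.inl hcT) |>.2 h2
      have h4 : t ≤ (2 * μ Eᶜ / c).toReal := by
        have hfin : 2 * μ Eᶜ / c ≠ ⊤ :=
          (ENNReal.div_lt_top (ENNReal.mul_ne_top (by norm_num) hEc) hc0.ne').ne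
        exact (ENNReal.ofReal_le_iff_le_toReal hfin).1 h3
      exact le_trans h4 (le_max_right _ _)
  choose! r hr0 hr1 hr2 using key
  obtain ⟨u, huB, hdisj, hcov⟩ :=
    Vitali.exists_disjoint_subfamily_covering_enlargement_closedBall B id r R
      (fun a ha => hr2 a ha) 4 (by norm_num)
  have hcnt : u.Countable := by
    set As : (Fin n → ℝ) → Set (Fin n → ℝ) :=
      fun b => if b ∈ u then closedBall b (r b) else ∅ with hAs
    have hmble : ∀ i, MeasurableSet (As i) := by
      intro i
      by_cases h : i ∈ u
      · simpa [hAs, h] using (measurableSet_closedBall : MeasurableSet (closedBall i (r i)))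
      · simp [hAs, h]
    have hdisj' : Pairwise (Function.onFun Disjoint As) := by
      intro i j hij
      rw [Function.onFun, hAs]
      by_cases hi : i ∈ u <;> by_cases hj : j ∈ u <;> simp only [hi, hj, if_pos, if_neg,
        if_true, if_false]
      · exact hdisj hi hj hij
      all_goals simp
    have := Measure.countable_meas_pos_of_disjoint_iUnion (μ := μ) hmble hdisj'
    refine this.mono fun b hb => ?_
    simp only [Set.mem_setOf_eq, hAs, if_pos hb]
    exact lt_of_lt_of_le (measure_ball_pos μ b (hr0 b (huB hb)))
      (measure_mono ball_subset_closedBall)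
  have hcover : B ⊆ ⋃ b ∈ u, closedBall b (4 * r b) := by
    intro z hz
    obtain ⟨b, hbu, hsub⟩ := hcov z hz
    exact Set.mem_biUnion hbu (hsub (mem_closedBall_self (hr0 z hz).le))
  calc μ B ≤ μ (⋃ b ∈ u, closedBall b (4 * r b)) := measure_mono hcover
    _ ≤ ∑' b : u, μ (closedBall b (4 * r b)) := measure_biUnion_le μ hcnt _
    _ ≤ ∑' b : u, ENNReal.ofReal (4^n) * (2 * μ (Eᶜ ∩ ball b (r b))) := by
        refine ENNReal.tsum_le_tsum fun b => ?_
        have hrb0 : 0 < r b := hr0 b (huB b.2)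
        have h1 : μ (closedBall (b : Fin n → ℝ) (4 * r b)) =
            ENNReal.ofReal (4^n) * μ (ball (b : Fin n → ℝ) (r b)) := by
          rw [hμ, Measure.addHaar_closedBall _ _ (by positivity),
            Measure.addHaar_ball _ _ hrb0.le, hfr, mul_pow,
            ENNReal.ofReal_mul (by positivity), mul_assoc]
        rw [h1]
        exact mul_le_mul_right (hr1 b (huB b.2)) _
    _ = ENNReal.ofReal (4^n) * 2 * ∑' b : u, μ (Eᶜ ∩ ball b (r b)) := by
        rw [← ENNReal.tsum_mul_left]; congr 1; ext b; ring
    _ ≤ ENNReal.ofReal (4^n) * 2 * μ Eᶜ := by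
        refine mul_le_mul_right ?_ _
        have hdisj2 : u.PairwiseDisjoint fun b => Eᶜ ∩ ball b (r b) := by
          refine hdisj.mono fun b => ?_
          exact Set.inter_subset_right.trans ball_subset_closedBall
        rw [← measure_biUnion hcnt hdisj2 fun b _ => (hE.compl.inter measurableSet_ball)]
        exact measure_mono (Set.iUnion₂_subset fun b _ => Set.inter_subset_left)
    _ = ENNReal.ofReal (2 * 4^n) * μ Eᶜ := by
        rw [ENNReal.ofReal_mul (by norm_num), ENNReal.ofReal_ofNat, mul_comm (ENNReal.ofReal _)]

noncomputable def gq (n : ℕ) (F : (Fin n → ℝ) → ℝ → ℂ) (q : (Fin n → ℝ) × ℝ) : ℝ≥0∞ :=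
  (‖F q.1 q.2‖₊ : ℝ≥0∞) ^ 2 / ENNReal.ofReal (q.2 ^ (n+1))

noncomputable def hq (n : ℕ) (F : (Fin n → ℝ) → ℝ → ℂ) (q : (Fin n → ℝ) × ℝ) : ℝ≥0∞ :=
  (‖F q.1 q.2‖₊ : ℝ≥0∞) ^ 2 / ENNReal.ofReal q.2

noncomputable def VV (n : ℕ) (F : (Fin n → ℝ) → ℝ → ℂ) (x : Fin n → ℝ) : ℝ≥0∞ :=
  ∫⁻ t in Set.Ioi (0:ℝ), hq n F (x, t)

noncomputable def SS (n : ℕ) (F : (Fin n → ℝ) → ℝ → ℂ) (y : Fin n → ℝ) : ℝ≥0∞ :=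
  ∫⁻ q in {q : (Fin n → ℝ) × ℝ | dist y q.1 < q.2}, gq n F q

lemma vertSq_eq (n : ℕ) (F : (Fin n → ℝ) → ℝ → ℂ) (x : Fin n → ℝ) :
    vertSq n F x = VV n F x ^ ((1:ℝ)/2) := rfl

lemma conSq_eq (n : ℕ) (F : (Fin n → ℝ) → ℝ → ℂ) (y : Fin n → ℝ) :
    conSq n F y = SS n F y ^ ((1:ℝ)/2) := rfl

section Meas

variable {n : ℕ} {F : (Fin n → ℝ) → ℝ → ℂ} (hF : Measurable (Function.uncurry F))

lemma gq_meas (hF : Measurable (Function.uncurry F)) : Measurable (gq n F) := by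
  apply Measurable.div
  · exact ((hF.comp (measurable_fst.prodMk measurable_snd)).nnnorm.coe_nnreal_ennreal).pow_const 2
  · exact ENNReal.measurable_ofReal.comp ((measurable_snd.pow_const (n+1)))

lemma hq_meas (hF : Measurable (Function.uncurry F)) : Measurable (hq n F) := by
  apply Measurable.div
  · exact ((hF.comp (measurable_fst.prodMk measurable_snd)).nnnorm.coe_nnreal_ennreal).pow_const 2
  · exact ENNReal.measurable_ofReal.comp measurable_snd

lemma VV_meas (hF : Measurable (Function.uncurry F)) : Measurable (VV n F) := by
  apply Measurable.lintegral_prod_right (f := fun x t => hq n F (x, t))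
  exact hq_meas hF

lemma cone_meas (y : Fin n → ℝ) :
    MeasurableSet {q : (Fin n → ℝ) × ℝ | dist y q.1 < q.2} :=
  (isOpen_lt (by fun_prop) continuous_snd).measurableSet

lemma coneK_meas (hF : Measurable (Function.uncurry F)) :
    Measurable (fun z : (Fin n → ℝ) × ((Fin n → ℝ) × ℝ) =>
      if dist z.1 z.2.1 < z.2.2 then gq n F z.2 else 0) := by
  refine Measurable.ite ?_ ((gq_meas hF).comp measurable_snd) measurable_const
  exact (isOpen_lt (by fun_prop) (by fun_prop)).measurableSet

lemma SS_eq_ite (y : Fin n → ℝ) : SS n F y = ∫⁻ q,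
    (if dist y q.1 < q.2 then gq n F q else 0) ∂(volume : Measure ((Fin n → ℝ) × ℝ)) := by
  classical
  rw [SS, ← lintegral_indicator (cone_meas y)]
  refine lintegral_congr fun q => ?_
  by_cases h : dist y q.1 < q.2 <;> simp [Set.indicator_apply, h]

set_option maxHeartbeats 1000000 in
lemma SS_meas (hF : Measurable (Function.uncurry F)) : Measurable (SS n F) := by
  have h1 : SS n F = fun y => ∫⁻ q,
      (if dist y q.1 < q.2 then gq n F q else 0) ∂(volume : Measure ((Fin n → ℝ) × ℝ)) := by
    funext y; exact SS_eq_ite y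
  rw [h1]
  have hm : Measurable (Function.uncurry fun (y : Fin n → ℝ) (q : (Fin n → ℝ) × ℝ) =>
      if dist y q.1 < q.2 then gq n F q else 0) := coneK_meas hF
  exact hm.lintegral_prod_right

lemma fub (hF : Measurable (Function.uncurry F)) (E : Set (Fin n → ℝ)) :
    ∫⁻ y in E, SS n F y ∂volume =
      ∫⁻ q, gq n F q * volume (E ∩ ball q.1 q.2) ∂(volume : Measure ((Fin n → ℝ) × ℝ)) := by
  have h1 : ∀ y, SS n F y = ∫⁻ q,
      Set.indicator {q : (Fin n → ℝ) × ℝ | dist y q.1 < q.2} (gq n F) q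
        ∂(volume : Measure ((Fin n → ℝ) × ℝ)) := by
    intro y; rw [SS, lintegral_indicator (cone_meas y)]
  simp_rw [h1]
  rw [lintegral_lintegral_swap]
  · refine lintegral_congr fun q => ?_
    have h2 : ∀ y : Fin n → ℝ,
        Set.indicator {q : (Fin n → ℝ) × ℝ | dist y q.1 < q.2} (gq n F) q
          = Set.indicator (ball q.1 q.2) (fun _ => gq n F q) y := by
      intro y
      classical
      by_cases h : dist y q.1 < q.2 <;>
        simp [Set.indicator_apply, h, Metric.mem_ball, Set.mem_setOf_eq]
    simp_rw [h2]
    rw [lintegral_indicator measurableSet_ball, setLIntegral_const,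
      Measure.restrict_apply measurableSet_ball, Set.inter_comm]
  · apply Measurable.aemeasurable
    have heq : (Function.uncurry fun (y : Fin n → ℝ) (q : (Fin n → ℝ) × ℝ) =>
        Set.indicator {q : (Fin n → ℝ) × ℝ | dist y q.1 < q.2} (gq n F) q)
        = fun z : (Fin n → ℝ) × ((Fin n → ℝ) × ℝ) =>
          if dist z.1 z.2.1 < z.2.2 then gq n F z.2 else 0 := by
      classical
      funext z
      by_cases h : dist z.1 z.2.1 < z.2.2 <;>
        simp [Function.uncurry, Set.indicator_apply, h, Set.mem_setOf_eq]
    rw [heq]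
    exact coneK_meas hF

end Meas

lemma aux_mul_div (a b c d : ℝ≥0∞) (hb0 : b ≠ 0) (hbT : b ≠ ⊤) :
    a / (b * d) * (b * c) = a / d * c := by
  rw [div_eq_mul_inv, div_eq_mul_inv, ENNReal.mul_inv (Or.inl hb0) (Or.inl hbT)]
  calc a * (b⁻¹ * d⁻¹) * (b * c) = a * d⁻¹ * c * (b⁻¹ * b) := by ring
    _ = a * d⁻¹ * c := by rw [ENNReal.inv_mul_cancel hb0 hbT, mul_one]

lemma stepA (n : ℕ) (hn : 0 < n) {F : (Fin n → ℝ) → ℝ → ℂ}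
    (hF : Measurable (Function.uncurry F)) (E D : Set (Fin n → ℝ))
    (hD : MeasurableSet D)
    (hgood : ∀ x ∈ D, ∀ t : ℝ, 0 < t → volume (ball x t) ≤ 2 * volume (E ∩ ball x t)) :
    ∫⁻ x in D, VV n F x ≤
      2 * (volume (ball (0 : Fin n → ℝ) 1))⁻¹ * ∫⁻ y in E, SS n F y := by
  haveI : Nontrivial (Fin n → ℝ) :=
    ⟨0, fun _ => 1, fun h => by simpa using congrFun h ⟨0, hn⟩⟩
  set μ := (volume : Measure (Fin n → ℝ)) with hμ
  set c := μ (ball (0 : Fin n → ℝ) 1) with hc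
  have hc0 : c ≠ 0 := (measure_ball_pos μ _ one_pos).ne'
  have hcT : c ≠ ⊤ := measure_ball_lt_top.ne
  have hfr : Module.finrank ℝ (Fin n → ℝ) = n := Module.finrank_fin_fun ℝ
  have hpt : ∀ z : (Fin n → ℝ) × ℝ, z ∈ D ×ˢ Set.Ioi (0:ℝ) →
      hq n F z ≤ 2 * c⁻¹ * (gq n F z * μ (E ∩ ball z.1 z.2)) := by
    rintro ⟨x, t⟩ ⟨hx, ht'⟩
    have ht : (0:ℝ) < t := ht'
    have hball : μ (ball x t) = ENNReal.ofReal (t ^ n) * c := by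
      rw [hc, hμ, Measure.addHaar_ball _ _ ht.le, hfr]
    have htn0 : ENNReal.ofReal (t^n) ≠ 0 := (ENNReal.ofReal_pos.2 (by positivity)).ne'
    have hkey : gq n F (x, t) * μ (ball x t) = hq n F (x, t) * c := by
      rw [hball, gq, hq]
      have hsp : ENNReal.ofReal (t ^ (n+1)) = ENNReal.ofReal (t^n) * ENNReal.ofReal t := by
        rw [← ENNReal.ofReal_mul (by positivity), ← pow_succ]
      rw [hsp]
      exact aux_mul_div _ _ _ _ htn0 ENNReal.ofReal_ne_top
    calc hq n F (x,t) = c⁻¹ * (hq n F (x,t) * c) := by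
          rw [mul_comm (hq n F (x,t)) c, ← mul_assoc, ENNReal.inv_mul_cancel hc0 hcT, one_mul]
      _ = c⁻¹ * (gq n F (x,t) * μ (ball x t)) := by rw [hkey]
      _ ≤ c⁻¹ * (gq n F (x,t) * (2 * μ (E ∩ ball x t))) :=
          mul_le_mul_right (mul_le_mul_right (hgood x hx t ht) _) _
      _ = 2 * c⁻¹ * (gq n F (x,t) * μ (E ∩ ball x t)) := by ring
  have h5 : ∫⁻ x in D, VV n F x ∂μ
      = ∫⁻ z in D ×ˢ Set.Ioi (0:ℝ), hq n F z ∂(volume : Measure ((Fin n → ℝ) × ℝ)) := by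
    rw [MeasureTheory.Measure.volume_eq_prod, ← Measure.prod_restrict,
      MeasureTheory.lintegral_prod _ (hq_meas hF).aemeasurable]
    rfl
  rw [h5]
  calc ∫⁻ z in D ×ˢ Set.Ioi (0:ℝ), hq n F z ∂(volume : Measure ((Fin n → ℝ) × ℝ))
      ≤ ∫⁻ z in D ×ˢ Set.Ioi (0:ℝ), 2 * c⁻¹ * (gq n F z * μ (E ∩ ball z.1 z.2))
          ∂(volume : Measure ((Fin n → ℝ) × ℝ)) := by
        refine lintegral_mono_ae ?_
        filter_upwards [ae_restrict_mem (hD.prod measurableSet_Ioi)] with z hz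
        exact hpt z hz
    _ ≤ ∫⁻ z, 2 * c⁻¹ * (gq n F z * μ (E ∩ ball z.1 z.2))
          ∂(volume : Measure ((Fin n → ℝ) × ℝ)) := setLIntegral_le_lintegral _ _
    _ = 2 * c⁻¹ * ∫⁻ z, gq n F z * μ (E ∩ ball z.1 z.2)
          ∂(volume : Measure ((Fin n → ℝ) × ℝ)) :=
        lintegral_const_mul' _ _ (ENNReal.mul_ne_top (by norm_num) (ENNReal.inv_ne_top.2 hc0))
    _ = 2 * c⁻¹ * ∫⁻ y in E, SS n F y ∂μ := by rw [fub hF E]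

lemma vertSq_meas {n : ℕ} {F : (Fin n → ℝ) → ℝ → ℂ} (hF : Measurable (Function.uncurry F)) :
    Measurable (vertSq n F) := by
  have : vertSq n F = fun x => VV n F x ^ ((1:ℝ)/2) := funext (vertSq_eq n F)
  rw [this]
  exact ENNReal.continuous_rpow_const.measurable.comp (VV_meas hF)

lemma conSq_meas {n : ℕ} {F : (Fin n → ℝ) → ℝ → ℂ} (hF : Measurable (Function.uncurry F)) :
    Measurable (conSq n F) := by
  have : conSq n F = fun y => SS n F y ^ ((1:ℝ)/2) := funext (conSq_eq n F)
  rw [this]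
  exact ENNReal.continuous_rpow_const.measurable.comp (SS_meas hF)

lemma sq_of_half (a : ℝ≥0∞) : (a ^ ((1:ℝ)/2)) ^ (2:ℝ) = a := by
  rw [← ENNReal.rpow_mul]
  norm_num

lemma goodlambda (n : ℕ) (hn : 0 < n) {F : (Fin n → ℝ) → ℝ → ℂ}
    (hF : Measurable (Function.uncurry F)) (t : ℝ) (ht : 0 < t) :
    volume {x | ENNReal.ofReal t < vertSq n F x} ≤
      ENNReal.ofReal (2 * 4^n) * volume {y | ENNReal.ofReal t < conSq n F y} +
      (ENNReal.ofReal t ^ (2:ℝ))⁻¹ * (2 * (volume (ball (0 : Fin n → ℝ) 1))⁻¹ *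
        ∫⁻ y in {y | conSq n F y ≤ ENNReal.ofReal t}, SS n F y) := by
  set μ := (volume : Measure (Fin n → ℝ)) with hμ
  set E := {y | conSq n F y ≤ ENNReal.ofReal t} with hE
  have hEm : MeasurableSet E := measurableSet_le (conSq_meas hF) measurable_const
  have hEc : Eᶜ = {y | ENNReal.ofReal t < conSq n F y} := by
    ext y; simp [hE, not_le]
  set B := {z : Fin n → ℝ | ¬ ∀ s : ℝ, 0 < s →
      μ (ball z s) ≤ 2 * μ (E ∩ ball z s)} with hB
  set D := (toMeasurable μ B)ᶜ with hD
  have hDm : MeasurableSet D := (measurableSet_toMeasurable μ B).compl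
  have hDgood : ∀ x ∈ D, ∀ s : ℝ, 0 < s → μ (ball x s) ≤ 2 * μ (E ∩ ball x s) := by
    intro x hx
    have hxB : x ∉ B := fun hmem => hx (subset_toMeasurable μ B hmem)
    rw [hB, Set.mem_setOf_eq, not_not] at hxB
    exact hxB
  have hsplit : μ {x | ENNReal.ofReal t < vertSq n F x} ≤
      μ Dᶜ + μ ({x | ENNReal.ofReal t < vertSq n F x} ∩ D) := by
    refine le_trans (measure_mono ?_) (measure_union_le _ _)
    intro x hx
    by_cases hxD : x ∈ D
    · exact Or.inr ⟨hx, hxD⟩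
    · exact Or.inl hxD
  have hb1 : μ Dᶜ ≤ ENNReal.ofReal (2 * 4^n) * μ {y | ENNReal.ofReal t < conSq n F y} := by
    rw [hD, compl_compl, measure_toMeasurable, ← hEc]
    exact aux_maximal n hn E hEm
  have hb2 : μ ({x | ENNReal.ofReal t < vertSq n F x} ∩ D) ≤
      (ENNReal.ofReal t ^ (2:ℝ))⁻¹ * (2 * (μ (ball (0 : Fin n → ℝ) 1))⁻¹ *
        ∫⁻ y in E, SS n F y) := by
    have hsub : {x | ENNReal.ofReal t < vertSq n F x} ⊆
        {x | ENNReal.ofReal t ^ (2:ℝ) ≤ VV n F x} := by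
      intro x hx
      rw [Set.mem_setOf_eq] at hx ⊢
      have h2 := ENNReal.rpow_lt_rpow hx (by norm_num : (0:ℝ) < 2)
      rw [vertSq_eq, sq_of_half] at h2
      exact h2.le
    have hcheb : ENNReal.ofReal t ^ (2:ℝ) *
        μ ({x | ENNReal.ofReal t ^ (2:ℝ) ≤ VV n F x} ∩ D) ≤ ∫⁻ x in D, VV n F x := by
      have := mul_meas_ge_le_lintegral₀ (μ := μ.restrict D)
        (VV_meas hF).aemeasurable (ENNReal.ofReal t ^ (2:ℝ))
      rwa [Measure.restrict_apply (measurableSet_le measurable_const (VV_meas hF))] at this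
    have hstep := stepA n hn hF E D hDm hDgood
    have hne0 : ENNReal.ofReal t ^ (2:ℝ) ≠ 0 := by
      simp only [ne_eq, ENNReal.rpow_eq_zero_iff, not_or]
      constructor
      · rintro ⟨h1, -⟩; exact (ENNReal.ofReal_pos.2 ht).ne' h1
      · rintro ⟨h1, -⟩; exact ENNReal.ofReal_ne_top h1
    have hneT : ENNReal.ofReal t ^ (2:ℝ) ≠ ⊤ :=
      ENNReal.rpow_ne_top_of_nonneg (by norm_num) ENNReal.ofReal_ne_top
    calc μ ({x | ENNReal.ofReal t < vertSq n F x} ∩ D)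
        ≤ μ ({x | ENNReal.ofReal t ^ (2:ℝ) ≤ VV n F x} ∩ D) :=
          measure_mono (Set.inter_subset_inter_left D hsub)
      _ = (ENNReal.ofReal t ^ (2:ℝ))⁻¹ * (ENNReal.ofReal t ^ (2:ℝ) *
            μ ({x | ENNReal.ofReal t ^ (2:ℝ) ≤ VV n F x} ∩ D)) := by
          rw [← mul_assoc, ENNReal.inv_mul_cancel hne0 hneT, one_mul]
      _ ≤ (ENNReal.ofReal t ^ (2:ℝ))⁻¹ * ∫⁻ x in D, VV n F x :=
          mul_le_mul_right hcheb _
      _ ≤ (ENNReal.ofReal t ^ (2:ℝ))⁻¹ * (2 * (μ (ball (0 : Fin n → ℝ) 1))⁻¹ *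
            ∫⁻ y in E, SS n F y) := mul_le_mul_right hstep _
  exact le_trans hsplit (add_le_add hb1 hb2)

lemma aux_inner {p : ℝ} (hp : 0 < p) (hplt : p < 2) (a : ℝ≥0∞) (ha : a ≠ ⊤) :
    a ^ (2:ℝ) * ∫⁻ t in Set.Ioi (0:ℝ),
        (if a ≤ ENNReal.ofReal t then ENNReal.ofReal (t^(p-3)) else 0)
      ≤ ENNReal.ofReal (1/(2-p)) * a ^ p := by
  classical
  rcases eq_or_ne a 0 with rfl | ha0
  · rw [ENNReal.zero_rpow_of_pos (by norm_num : (0:ℝ) < 2), zero_mul]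
    exact zero_le'
  · set s := a.toReal with hs
    have hs0 : 0 < s := ENNReal.toReal_pos ha0 ha
    have hseq : a = ENNReal.ofReal s := (ENNReal.ofReal_toReal ha).symm
    have hsetm : MeasurableSet {t : ℝ | a ≤ ENNReal.ofReal t} :=
      measurableSet_le measurable_const ENNReal.measurable_ofReal
    have h1 : ∫⁻ t in Set.Ioi (0:ℝ),
        (if a ≤ ENNReal.ofReal t then ENNReal.ofReal (t^(p-3)) else 0)
        = ∫⁻ t in Set.Ici s, ENNReal.ofReal (t^(p-3)) := by
      have h2 : ∀ t : ℝ, (if a ≤ ENNReal.ofReal t then ENNReal.ofReal (t^(p-3)) else 0)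
          = Set.indicator {t : ℝ | a ≤ ENNReal.ofReal t}
              (fun t => ENNReal.ofReal (t^(p-3))) t := by
        intro t; rw [Set.indicator_apply]; congr 1
      simp_rw [h2]
      rw [lintegral_indicator hsetm, Measure.restrict_restrict hsetm]
      congr 1
      have : {t : ℝ | a ≤ ENNReal.ofReal t} ∩ Set.Ioi 0 = Set.Ici s := by
        ext t
        simp only [Set.mem_inter_iff, Set.mem_setOf_eq, Set.mem_Ioi, Set.mem_Ici]
        constructor
        · rintro ⟨h3, h4⟩
          exact (ENNReal.le_ofReal_iff_toReal_le ha h4.le).1 h3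
        · intro h3
          exact ⟨(ENNReal.le_ofReal_iff_toReal_le ha (le_trans hs0.le h3)).2 h3,
            lt_of_lt_of_le hs0 h3⟩
      rw [this]
    rw [h1]
    have h5 : ∫⁻ t in Set.Ici s, ENNReal.ofReal (t^(p-3))
        = ENNReal.ofReal (s^(p-2) * (1/(2-p))) := by
      rw [← Measure.restrict_congr_set Ioi_ae_eq_Ici]
      have hint : IntegrableOn (fun t : ℝ => t^(p-3)) (Set.Ioi s) :=
        integrableOn_Ioi_rpow_of_lt (by linarith) hs0
      rw [← ofReal_integral_eq_lintegral_ofReal hint ?nn]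
      · congr 1
        rw [integral_Ioi_rpow_of_lt (by linarith) hs0]
        have hne : p - 2 ≠ 0 := by linarith
        have : p - 3 + 1 = p - 2 := by ring
        rw [this]
        have h2p : (2:ℝ) - p ≠ 0 := by linarith
        field_simp
        ring
      case nn =>
        filter_upwards [ae_restrict_mem measurableSet_Ioi] with t htt
        have : (0:ℝ) < t := lt_trans hs0 htt
        positivity
    rw [h5, ENNReal.ofReal_mul (by positivity)]
    have h6 : ENNReal.ofReal (s^(p-2)) = a ^ (p-2) := by
      rw [← ENNReal.ofReal_rpow_of_pos hs0, ← hseq]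
    rw [h6]
    calc a ^ (2:ℝ) * (a ^ (p-2) * ENNReal.ofReal (1/(2-p)))
        = ENNReal.ofReal (1/(2-p)) * (a ^ (2:ℝ) * a ^ (p-2)) := by ring
      _ = ENNReal.ofReal (1/(2-p)) * a ^ p := by
          rw [← ENNReal.rpow_add _ _ ha0 ha]
          norm_num
      _ ≤ ENNReal.ofReal (1/(2-p)) * a ^ p := le_rfl

lemma aux_J (n : ℕ) {F : (Fin n → ℝ) → ℝ → ℂ} (hF : Measurable (Function.uncurry F))
    {p : ℝ} (hp : 0 < p) (hplt : p < 2)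
    (hfin : ∀ᵐ y ∂(volume : Measure (Fin n → ℝ)), conSq n F y ≠ ⊤) :
    ∫⁻ t in Set.Ioi (0:ℝ), ENNReal.ofReal (t^(p-3)) *
        (∫⁻ y in {y | conSq n F y ≤ ENNReal.ofReal t}, SS n F y)
      ≤ ENNReal.ofReal (1/(2-p)) * ∫⁻ y, conSq n F y ^ p := by
  classical
  set μ := (volume : Measure (Fin n → ℝ)) with hμ
  have hSm : Measurable (conSq n F) := conSq_meas hF
  have hSSm : Measurable (SS n F) := SS_meas hF
  have hitem : ∀ y, Measurable (fun t : ℝ =>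
      if conSq n F y ≤ ENNReal.ofReal t then ENNReal.ofReal (t^(p-3)) else 0) := by
    intro y
    refine Measurable.ite ?_ (by fun_prop) measurable_const
    exact measurableSet_le measurable_const ENNReal.measurable_ofReal
  have h1 : ∀ t : ℝ, ENNReal.ofReal (t^(p-3)) *
      ∫⁻ y in {y | conSq n F y ≤ ENNReal.ofReal t}, SS n F y
      = ∫⁻ y, SS n F y *
          (if conSq n F y ≤ ENNReal.ofReal t then ENNReal.ofReal (t^(p-3)) else 0) ∂μ := by
    intro t
    rw [← lintegral_indicator (measurableSet_le hSm measurable_const),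
      ← lintegral_const_mul _ (hSSm.indicator (measurableSet_le hSm measurable_const))]
    refine lintegral_congr fun y => ?_
    rw [Set.indicator_apply]
    by_cases h : conSq n F y ≤ ENNReal.ofReal t <;> simp [h, mul_comm]
  simp_rw [← hμ] at h1
  simp_rw [h1]
  rw [lintegral_lintegral_swap ?mm]
  case mm =>
    apply Measurable.aemeasurable
    have hset : MeasurableSet {z : ℝ × (Fin n → ℝ) | conSq n F z.2 ≤ ENNReal.ofReal z.1} :=
      measurableSet_le (hSm.comp measurable_snd)
        (ENNReal.measurable_ofReal.comp measurable_fst)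
    exact Measurable.mul (hSSm.comp measurable_snd)
      (Measurable.ite hset (by fun_prop) measurable_const)
  calc ∫⁻ y, (∫⁻ t in Set.Ioi (0:ℝ), SS n F y *
        (if conSq n F y ≤ ENNReal.ofReal t then ENNReal.ofReal (t^(p-3)) else 0)) ∂μ
      ≤ ∫⁻ y, ENNReal.ofReal (1/(2-p)) * conSq n F y ^ p ∂μ := by
        refine lintegral_mono_ae ?_
        filter_upwards [hfin] with y hy
        rw [lintegral_const_mul _ (hitem y)]
        have hSS : SS n F y = conSq n F y ^ (2:ℝ) := by
          rw [conSq_eq n F y, sq_of_half]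
        rw [hSS]
        exact aux_inner hp hplt (conSq n F y) hy
    _ = ENNReal.ofReal (1/(2-p)) * ∫⁻ y, conSq n F y ^ p ∂μ :=
        lintegral_const_mul _ (hSm.pow_const p)

lemma aux_inv_shuffle (a X y : ℝ≥0∞) (ha0 : a ≠ 0) (haT : a ≠ ⊤) :
    a⁻¹ * X * (y * a) = y * X := by
  calc a⁻¹ * X * (y * a) = y * X * (a⁻¹ * a) := by ring
    _ = y * X := by rw [ENNReal.inv_mul_cancel ha0 haT, mul_one]

lemma fub_univ (n : ℕ) (hn : 0 < n) {F : (Fin n → ℝ) → ℝ → ℂ}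
    (hF : Measurable (Function.uncurry F)) :
    ∫⁻ y, SS n F y ∂volume
      = volume (ball (0 : Fin n → ℝ) 1) * ∫⁻ x, VV n F x ∂volume := by
  classical
  haveI : Nontrivial (Fin n → ℝ) :=
    ⟨0, fun _ => 1, fun h => by simpa using congrFun h ⟨0, hn⟩⟩
  set μ := (volume : Measure (Fin n → ℝ)) with hμ
  set c := μ (ball (0 : Fin n → ℝ) 1) with hc
  have hfr : Module.finrank ℝ (Fin n → ℝ) = n := Module.finrank_fin_fun ℝ
  rw [← setLIntegral_univ, fub hF Set.univ]
  have hpt : ∀ q : (Fin n → ℝ) × ℝ, gq n F q * volume (Set.univ ∩ ball q.1 q.2)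
      = Set.indicator (Set.univ ×ˢ Set.Ioi (0:ℝ)) (fun q => c * hq n F q) q := by
    rintro ⟨x, t⟩
    by_cases ht : 0 < t
    · have hmem : ((x, t) : (Fin n → ℝ) × ℝ) ∈ Set.univ ×ˢ Set.Ioi (0:ℝ) :=
        ⟨Set.mem_univ x, ht⟩
      rw [Set.indicator_of_mem hmem, Set.univ_inter]
      have hball : μ (ball x t) = ENNReal.ofReal (t ^ n) * c := by
        rw [hc, hμ, Measure.addHaar_ball _ _ ht.le, hfr]
      have htn0 : ENNReal.ofReal (t^n) ≠ 0 := (ENNReal.ofReal_pos.2 (by positivity)).ne'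
      have hkey : gq n F (x, t) * μ (ball x t) = hq n F (x, t) * c := by
        rw [hball, gq, hq]
        have hsp : ENNReal.ofReal (t ^ (n+1)) = ENNReal.ofReal (t^n) * ENNReal.ofReal t := by
          rw [← ENNReal.ofReal_mul (by positivity), ← pow_succ]
        rw [hsp]
        exact aux_mul_div _ _ _ _ htn0 ENNReal.ofReal_ne_top
      rw [show volume (ball x t) = μ (ball x t) from rfl, hkey, mul_comm]
    · have hempty : ball x t = ∅ := ball_eq_empty.2 (not_lt.1 ht)
      rw [Set.univ_inter, hempty, measure_empty, mul_zero,
        Set.indicator_of_notMem (fun hmem => ht hmem.2)]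
  simp_rw [hpt]
  rw [lintegral_indicator (MeasurableSet.univ.prod measurableSet_Ioi),
    Measure.volume_eq_prod, ← Measure.prod_restrict, Measure.restrict_univ,
    MeasureTheory.lintegral_prod _ ((hq_meas hF).const_mul c).aemeasurable]
  have h2 : ∀ x, ∫⁻ t in Set.Ioi (0:ℝ), c * hq n F (x, t) = c * VV n F x := by
    intro x
    rw [VV]
    exact lintegral_const_mul c (f := fun t => hq n F (x, t))
      ((hq_meas hF).comp measurable_prodMk_left)
  simp_rw [h2]
  rw [lintegral_const_mul c (VV_meas hF)]

/-- For `0 < p ≤ 2`, the vertical square function is dominated in `L^p` by the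
conical square function. -/
theorem stmt_2 (n : ℕ) (hn : 0 < n) (p : ℝ) (hp : 0 < p) (hp2 : p ≤ 2) :
    ∃ C : ℝ≥0∞, C ≠ ⊤ ∧
      ∀ F : (Fin n → ℝ) → ℝ → ℂ, Measurable (Function.uncurry F) →
        (∫⁻ x, vertSq n F x ^ p) ^ (1 / p) ≤ C * (∫⁻ x, conSq n F x ^ p) ^ (1 / p) := by
  classical
  set μ := (volume : Measure (Fin n → ℝ)) with hμ
  set c := μ (ball (0 : Fin n → ℝ) 1) with hc
  have hc0 : c ≠ 0 := (measure_ball_pos μ _ one_pos).ne'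
  have hcT : c ≠ ⊤ := measure_ball_lt_top.ne
  set K := ENNReal.ofReal (2 * 4^n) with hK
  have hK0 : K ≠ 0 := (ENNReal.ofReal_pos.2 (by positivity)).ne'
  have hKT : K ≠ ⊤ := ENNReal.ofReal_ne_top
  rcases eq_or_lt_of_le hp2 with hpeq | hplt
  · -- p = 2
    subst hpeq
    refine ⟨c⁻¹ ^ ((1:ℝ)/2), ENNReal.rpow_ne_top_of_nonneg (by norm_num)
      (ENNReal.inv_ne_top.2 hc0), fun F hF => ?_⟩
    have h1 : ∫⁻ x, vertSq n F x ^ (2:ℝ) ∂μ = ∫⁻ x, VV n F x ∂μ :=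
      lintegral_congr fun x => by rw [vertSq_eq, sq_of_half]
    have h2 : ∫⁻ x, conSq n F x ^ (2:ℝ) ∂μ = ∫⁻ x, SS n F x ∂μ :=
      lintegral_congr fun x => by rw [conSq_eq, sq_of_half]
    have h3 : ∫⁻ x, VV n F x ∂μ = c⁻¹ * ∫⁻ y, SS n F y ∂μ := by
      rw [fub_univ n hn hF, ← hc, ← hμ, ← mul_assoc, ENNReal.inv_mul_cancel hc0 hcT, one_mul]
    rw [h1, h2, h3, ENNReal.mul_rpow_of_nonneg _ _ (by norm_num : (0:ℝ) ≤ 1/2)]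
  · -- p < 2
    set C' : ℝ≥0∞ := K + ENNReal.ofReal p * (2 * c⁻¹ * ENNReal.ofReal (1/(2-p))) with hC'
    have hC'T : C' ≠ ⊤ := by
      refine ENNReal.add_ne_top.2 ⟨hKT, ?_⟩
      exact ENNReal.mul_ne_top ENNReal.ofReal_ne_top
        (ENNReal.mul_ne_top (ENNReal.mul_ne_top (by norm_num)
          (ENNReal.inv_ne_top.2 hc0)) ENNReal.ofReal_ne_top)
    have hC'0 : C' ≠ 0 := by
      simp only [hC', ne_eq, add_eq_zero, not_and]
      intro h; exact absurd h hK0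
    refine ⟨C' ^ ((1:ℝ)/p), ENNReal.rpow_ne_top_of_nonneg (by positivity) hC'T,
      fun F hF => ?_⟩
    have hSm : Measurable (conSq n F) := conSq_meas hF
    set M := ∫⁻ x, conSq n F x ^ p ∂μ with hM
    by_cases hMtop : M = ⊤
    · rw [hMtop, ENNReal.top_rpow_of_pos (by positivity), ENNReal.mul_top ?ne]
      case ne =>
        simp only [ne_eq, ENNReal.rpow_eq_zero_iff, not_or, not_and]
        exact ⟨fun h => absurd h hC'0, fun h => absurd h hC'T⟩
      exact le_top
    -- main case
    have hfin : ∀ᵐ y ∂μ, conSq n F y ≠ ⊤ := by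
      rw [ae_iff]
      simp only [ne_eq, not_not]
      by_contra h
      have h1 : {y | conSq n F y = ⊤} ⊆ {y | (⊤:ℝ≥0∞) ≤ conSq n F y ^ p} := by
        intro y hy
        rw [Set.mem_setOf_eq] at hy ⊢
        rw [hy, ENNReal.top_rpow_of_pos hp]
      have h2 := mul_meas_ge_le_lintegral₀ (μ := μ) ((hSm.pow_const p).aemeasurable) ⊤
      rw [ENNReal.top_mul (fun h0 => h (le_antisymm (h0 ▸ measure_mono h1) zero_le'))] at h2
      exact hMtop (top_le_iff.1 (le_trans h2 le_rfl))
    suffices hmain : ∫⁻ x, vertSq n F x ^ p ∂μ ≤ C' * M by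
      calc (∫⁻ x, vertSq n F x ^ p) ^ (1/p)
          ≤ (C' * M) ^ (1/p) := ENNReal.rpow_le_rpow hmain (by positivity)
        _ = C' ^ ((1:ℝ)/p) * M ^ (1/p) :=
            ENNReal.mul_rpow_of_nonneg _ _ (by positivity)
    -- layer cake for V
    have hLV := aux_layercake μ (vertSq n F) (vertSq_meas hF) hp
    have hLS := aux_layercake μ (conSq n F) hSm hp
    set w : ℝ → ℝ≥0∞ := fun t => ENNReal.ofReal (t ^ (p-1)) with hw
    set As : ℝ → ℝ≥0∞ := fun t => μ {x | ENNReal.ofReal t < conSq n F x} with hAs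
    set IE : ℝ → ℝ≥0∞ := fun t => ∫⁻ y in {y | conSq n F y ≤ ENNReal.ofReal t}, SS n F y
      with hIE
    have hAsm : Measurable As := by
      have : Antitone As := by
        intro t t' htt'
        exact measure_mono fun x hx =>
          lt_of_le_of_lt (ENNReal.ofReal_le_ofReal htt') hx
      exact this.measurable
    have hwm : Measurable w := by fun_prop
    have hstep1 : ∫⁻ t in Set.Ioi (0:ℝ), μ {x | ENNReal.ofReal t < vertSq n F x} * w t
        ≤ ∫⁻ t in Set.Ioi (0:ℝ),
            (K * (As t * w t) + 2 * c⁻¹ * (ENNReal.ofReal (t^(p-3)) * IE t)) := by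
      refine lintegral_mono_ae ?_
      filter_upwards [ae_restrict_mem measurableSet_Ioi] with t ht
      have ht' : (0:ℝ) < t := ht
      have hgl := goodlambda n hn hF t ht'
      have ha0 : (ENNReal.ofReal t ^ (2:ℝ)) ≠ 0 := by
        simp only [ne_eq, ENNReal.rpow_eq_zero_iff, not_or, not_and]
        exact ⟨fun h => absurd h (ENNReal.ofReal_pos.2 ht).ne', fun h =>
          absurd h ENNReal.ofReal_ne_top⟩
      have haT : (ENNReal.ofReal t ^ (2:ℝ)) ≠ ⊤ :=
        ENNReal.rpow_ne_top_of_nonneg (by norm_num) ENNReal.ofReal_ne_top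
      have hwsplit : ENNReal.ofReal (t^(p-3)) * ENNReal.ofReal t ^ (2:ℝ) = w t := by
        rw [ENNReal.ofReal_rpow_of_pos ht, ← ENNReal.ofReal_mul (by positivity),
          ← Real.rpow_add ht]
        have he : p - 3 + 2 = p - 1 := by ring
        rw [he, hw]
      calc μ {x | ENNReal.ofReal t < vertSq n F x} * w t
          ≤ (K * As t + (ENNReal.ofReal t ^ (2:ℝ))⁻¹ * (2 * c⁻¹ * IE t)) * w t :=
            mul_le_mul_left hgl _
        _ = K * (As t * w t) +
            (ENNReal.ofReal t ^ (2:ℝ))⁻¹ * (2 * c⁻¹ * IE t) * w t := by ring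
        _ = K * (As t * w t) + 2 * c⁻¹ * (ENNReal.ofReal (t^(p-3)) * IE t) := by
            congr 1
            rw [← hwsplit]
            calc (ENNReal.ofReal t ^ (2:ℝ))⁻¹ * (2 * c⁻¹ * IE t) *
                  (ENNReal.ofReal (t^(p-3)) * ENNReal.ofReal t ^ (2:ℝ))
                = 2 * c⁻¹ * (ENNReal.ofReal (t^(p-3)) * IE t) *
                  ((ENNReal.ofReal t ^ (2:ℝ))⁻¹ * ENNReal.ofReal t ^ (2:ℝ)) := by ring
              _ = 2 * c⁻¹ * (ENNReal.ofReal (t^(p-3)) * IE t) := by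
                  rw [ENNReal.inv_mul_cancel ha0 haT, mul_one]
    have hstep2 : ∫⁻ t in Set.Ioi (0:ℝ),
        (K * (As t * w t) + 2 * c⁻¹ * (ENNReal.ofReal (t^(p-3)) * IE t))
        = K * (∫⁻ t in Set.Ioi (0:ℝ), As t * w t) +
          2 * c⁻¹ * ∫⁻ t in Set.Ioi (0:ℝ), ENNReal.ofReal (t^(p-3)) * IE t := by
      rw [lintegral_add_left (f := fun t => K * (As t * w t)) ((hAsm.mul hwm).const_mul K)]
      rw [lintegral_const_mul' K _ hKT,
        lintegral_const_mul' (2 * c⁻¹) _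
          (ENNReal.mul_ne_top (by norm_num) (ENNReal.inv_ne_top.2 hc0))]
    have hJ := aux_J n hF hp hplt hfin
    have hL1 : ENNReal.ofReal p * ∫⁻ t in Set.Ioi (0:ℝ), As t * w t = M := by
      rw [hM, hLS]
    calc ∫⁻ x, vertSq n F x ^ p ∂μ
        = ENNReal.ofReal p *
            ∫⁻ t in Set.Ioi (0:ℝ), μ {x | ENNReal.ofReal t < vertSq n F x} * w t := hLV
      _ ≤ ENNReal.ofReal p * (K * (∫⁻ t in Set.Ioi (0:ℝ), As t * w t) +
            2 * c⁻¹ * ∫⁻ t in Set.Ioi (0:ℝ), ENNReal.ofReal (t^(p-3)) * IE t) := by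
          rw [← hstep2]; exact mul_le_mul_right hstep1 _
      _ ≤ ENNReal.ofReal p * (K * (∫⁻ t in Set.Ioi (0:ℝ), As t * w t) +
            2 * c⁻¹ * (ENNReal.ofReal (1/(2-p)) * M)) := by
          refine mul_le_mul_right (add_le_add_right (mul_le_mul_right ?_ _) _) _
          exact hJ
      _ = K * (ENNReal.ofReal p * ∫⁻ t in Set.Ioi (0:ℝ), As t * w t) +
            ENNReal.ofReal p * (2 * c⁻¹ * ENNReal.ofReal (1/(2-p))) * M := by ring
      _ = K * M + ENNReal.ofReal p * (2 * c⁻¹ * ENNReal.ofReal (1/(2-p))) * M := by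
          rw [hL1]
      _ = C' * M := by rw [hC']; ring
end

section
/- Let $F: \mathbb{R}^{n+1}_+ \to [0,\infty)$ be measurable, and for each cube $Q \subset \mathbb{R}^n$ define the local square function $A_{Q,F}(x) := \big( \iint_{|x-y|<t<\ell(Q)} |F(y,t)|^2 \, \frac{dy\,dt}{t^{n+1}} \big)^{1/2}$. Suppose there exists $C_0 > 0$ such that $\int_Q A_{Q,F}^2 \, dx \le C_0 |Q|$ for every cube $Q$. Then for every $p > 1$ there exists $C_1 = C_1(p, n, C_0)$ such that $\int_Q A_{Q,F}^p \, dx \le C_1 |Q|$ for every cube $Q$; moreover one may take $C_1 \lesssim_{p,n} C_0^{p/2}$. -/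
open MeasureTheory Metric ENNReal

/-- The square `A_{Q,F}(x)^2` of the local square function associated to the cube
of center `c` and side length `ℓ` (cubes are sup-norm balls `ball c (ℓ/2)`). -/
noncomputable def localSqSq (n : ℕ) (F : (Fin n → ℝ) → ℝ → ℝ) (ℓ : ℝ) (x : Fin n → ℝ) : ℝ≥0∞ :=
  ∫⁻ p in {p : (Fin n → ℝ) × ℝ | dist x p.1 < p.2 ∧ p.2 < ℓ},
    ENNReal.ofReal (F p.1 p.2 ^ 2 / p.2 ^ (n + 1))

namespace JNaux

/-! ### Elementary `ℝ≥0∞` lemmas -/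

lemma pow_add_le (y a : ℝ≥0∞) (m : ℕ) :
    (y + a) ^ (m + 1) ≤ y ^ (m + 1) + ((m : ℝ≥0∞) + 1) * a * (y + a) ^ m := by
  induction m with
  | zero => simp
  | succ m ih =>
    have step2 : (y + a) ^ (m + 1) * (y + a)
        ≤ (y ^ (m + 1) + ((m : ℝ≥0∞) + 1) * a * (y + a) ^ m) * (y + a) :=
      mul_le_mul_left ih (y + a)
    have step3 : (y ^ (m + 1) + ((m : ℝ≥0∞) + 1) * a * (y + a) ^ m) * (y + a)
        = y ^ (m + 1) * y + y ^ (m + 1) * a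
          + ((m : ℝ≥0∞) + 1) * a * ((y + a) ^ m * (y + a)) := by
      ring
    have step4 : y ^ (m + 1) * a ≤ (y + a) ^ (m + 1) * a :=
      mul_le_mul_left (pow_le_pow_left' le_self_add (m + 1)) a
    have step5 : (y + a) ^ (m + 1 + 1) ≤ y ^ (m + 1) * y + y ^ (m + 1) * a
          + ((m : ℝ≥0∞) + 1) * a * ((y + a) ^ m * (y + a)) := by
      calc (y + a) ^ (m + 1 + 1) = (y + a) ^ (m + 1) * (y + a) := pow_succ _ _
        _ ≤ _ := step2
        _ = _ := step3
    refine step5.trans ?_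
    rw [← pow_succ y (m + 1), ← pow_succ (y + a) m]
    calc y ^ (m + 1 + 1) + y ^ (m + 1) * a + ((m : ℝ≥0∞) + 1) * a * (y + a) ^ (m + 1)
        ≤ y ^ (m + 1 + 1) + (y + a) ^ (m + 1) * a
          + ((m : ℝ≥0∞) + 1) * a * (y + a) ^ (m + 1) := by gcongr
      _ = y ^ (m + 1 + 1) + (((m + 1 : ℕ) : ℝ≥0∞) + 1) * a * (y + a) ^ (m + 1) := by
          push_cast; ring

lemma tail_succ (a : ℕ → ℝ≥0∞) (d : ℕ) :
    ∑' k, a (k + d) = a d + ∑' k, a (k + (d + 1)) := by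
  rw [tsum_eq_zero_add' ENNReal.summable]
  congr 1
  · simp
  · exact tsum_congr fun k => congrArg a (by omega)

lemma prefix_split (a : ℕ → ℝ≥0∞) (d : ℕ) :
    ∑' k, a k = (∑ k ∈ Finset.range d, a k) + ∑' k, a (k + d) :=
  (ENNReal.summable.sum_add_tsum_nat_add').symm

lemma telescope (a : ℕ → ℝ≥0∞) (m : ℕ) :
    (∑' k, a k) ^ (m + 1) ≤ ((m : ℝ≥0∞) + 1) * ∑' d, a d * (∑' k, a (k + d)) ^ m := by
  set T : ℕ → ℝ≥0∞ := fun d => ∑' k, a (k + d) with hT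
  have hT0 : T 0 = ∑' k, a k := tsum_congr fun k => by simp
  have hTstep : ∀ d, T d = a d + T (d + 1) := fun d => tail_succ a d
  rw [← hT0]
  rcases eq_or_ne (∑' d, a d * T d ^ m) ∞ with hS | hS
  · rw [hS, ENNReal.mul_top (ne_of_gt (lt_of_lt_of_le zero_lt_one le_add_self))]
    exact le_top
  have key : ∀ D, T 0 ^ (m + 1) ≤
      ((m : ℝ≥0∞) + 1) * (∑ d ∈ Finset.range D, a d * T d ^ m) + T D ^ (m + 1) := by
    intro D
    induction D with
    | zero => simp
    | succ D ihD =>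
      refine ihD.trans ?_
      have h2 : T D ^ (m + 1) ≤ T (D + 1) ^ (m + 1) + ((m : ℝ≥0∞) + 1) * a D * T D ^ m := by
        calc T D ^ (m + 1) = (T (D + 1) + a D) ^ (m + 1) := by
              rw [hTstep D, add_comm]
          _ ≤ T (D + 1) ^ (m + 1) + ((m : ℝ≥0∞) + 1) * a D * (T (D + 1) + a D) ^ m :=
              pow_add_le _ _ _
          _ = T (D + 1) ^ (m + 1) + ((m : ℝ≥0∞) + 1) * a D * T D ^ m := by
              rw [add_comm (T (D + 1)) (a D), ← hTstep D]
      calc ((m : ℝ≥0∞) + 1) * (∑ d ∈ Finset.range D, a d * T d ^ m) + T D ^ (m + 1)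
          ≤ ((m : ℝ≥0∞) + 1) * (∑ d ∈ Finset.range D, a d * T d ^ m) +
            (T (D + 1) ^ (m + 1) + ((m : ℝ≥0∞) + 1) * a D * T D ^ m) := by gcongr
        _ = ((m : ℝ≥0∞) + 1) * (∑ d ∈ Finset.range (D + 1), a d * T d ^ m) +
            T (D + 1) ^ (m + 1) := by
            rw [Finset.sum_range_succ]; ring
  have hbound : ∀ D, T 0 ^ (m + 1) ≤
      ((m : ℝ≥0∞) + 1) * (∑' d, a d * T d ^ m) + T D ^ (m + 1) := by
    intro D
    refine (key D).trans ?_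
    gcongr
    exact ENNReal.sum_le_tsum _
  have htail : Filter.Tendsto (fun D => T D ^ (m + 1)) Filter.atTop (nhds 0) := by
    have h0 : Filter.Tendsto T Filter.atTop (nhds 0) := by
      rcases eq_or_ne (∑' k, a k) ∞ with h | h
      · exfalso
        apply hS
        rcases eq_or_ne m 0 with hm | hm
        · subst hm
          simpa [hT0] using h
        · by_cases hfin : ∀ d, a d ≠ ∞
          · have hTinf : ∀ d, T d = ∞ := by
              intro d
              by_contra hTd
              have hne : (∑ k ∈ Finset.range d, a k) + T d ≠ ∞ := by
                refine ENNReal.add_ne_top.2 ⟨?_, hTd⟩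
                exact (ENNReal.sum_lt_top.2 fun i _ => (hfin i).lt_top).ne
              rw [← prefix_split a d] at hne
              exact hne h
            have hpos : ∃ d, a d ≠ 0 := by
              by_contra hz
              push_neg at hz
              simp only [hz] at h
              simp at h
            obtain ⟨d, hd⟩ := hpos
            refine ENNReal.tsum_eq_top_of_eq_top ⟨d, ?_⟩
            rw [hTinf d, ENNReal.top_pow hm, ENNReal.mul_top hd]
          · push_neg at hfin
            obtain ⟨d, hd⟩ := hfin
            refine ENNReal.tsum_eq_top_of_eq_top ⟨d, ?_⟩
            have hTd : T d = ∞ := by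
              refine eq_top_iff.2 ?_
              calc (∞ : ℝ≥0∞) = a (0 + d) := by simp [hd]
                _ ≤ ∑' k, a (k + d) := ENNReal.le_tsum 0
            rw [hTd, hd, ENNReal.top_pow hm]
            simp
      · exact ENNReal.tendsto_sum_nat_add a h
    have := ((ENNReal.continuous_pow (m + 1)).tendsto 0).comp h0
    simpa [Function.comp_def] using this
  have hlim : Filter.Tendsto
      (fun D => ((m : ℝ≥0∞) + 1) * (∑' d, a d * T d ^ m) + T D ^ (m + 1))
      Filter.atTop (nhds (((m : ℝ≥0∞) + 1) * (∑' d, a d * T d ^ m) + 0)) :=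
    Filter.Tendsto.add tendsto_const_nhds htail
  have := ge_of_tendsto' hlim hbound
  simpa using this

lemma rpow_le_one_add_pow (x : ℝ≥0∞) {q : ℝ} (hq : 0 ≤ q) {m : ℕ} (hm : q ≤ m) :
    x ^ q ≤ 1 + x ^ m := by
  rcases le_or_gt x 1 with hx | hx
  · exact le_add_right (ENNReal.rpow_le_one hx hq)
  · calc x ^ q ≤ x ^ (m : ℝ) := ENNReal.rpow_le_rpow_of_exponent_le hx.le hm
      _ = x ^ m := by rw [ENNReal.rpow_natCast]
      _ ≤ 1 + x ^ m := le_add_self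

/-! ### Dyadic geometry -/

section Geometry

variable (n : ℕ) (c : Fin n → ℝ) (ℓ : ℝ)

/-- side length of a level `k` dyadic cube -/
noncomputable def sc (k : ℕ) : ℝ := ℓ / 2 ^ k

/-- base point (lower-left corner) of the dyadic cube of level `k`, index `j` -/
noncomputable def bse (k : ℕ) (j : Fin n → ℤ) (i : Fin n) : ℝ :=
  (c i - ℓ / 2) + j i * sc ℓ k

/-- the (half-open) dyadic cube of level `k`, index `j` -/
def Pset (k : ℕ) (j : Fin n → ℤ) : Set (Fin n → ℝ) :=
  Set.univ.pi fun i => Set.Ico (bse n c ℓ k j i) (bse n c ℓ k j i + sc ℓ k)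

/-- the index of the level `k` dyadic cube containing `x` -/
noncomputable def jfun (k : ℕ) (x : Fin n → ℝ) (i : Fin n) : ℤ :=
  ⌊(x i - (c i - ℓ / 2)) / sc ℓ k⌋

variable {n c ℓ}
variable (hl : 0 < ℓ)
include hl

lemma sc_pos (k : ℕ) : 0 < sc ℓ k := div_pos hl (by positivity)

lemma sc_zero : sc ℓ 0 = ℓ := by simp [sc]

lemma sc_anti {k k' : ℕ} (h : k ≤ k') : sc ℓ k' ≤ sc ℓ k := by
  apply div_le_div_of_nonneg_left hl.le (by positivity)
  exact pow_le_pow_right₀ one_le_two h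

lemma sc_add (k d : ℕ) : sc ℓ k = 2 ^ d * sc ℓ (k + d) := by
  rw [sc, sc, pow_add]
  field_simp

lemma mem_Pset_iff {k : ℕ} {j : Fin n → ℤ} {x : Fin n → ℝ} :
    x ∈ Pset n c ℓ k j ↔ ∀ i, bse n c ℓ k j i ≤ x i ∧ x i < bse n c ℓ k j i + sc ℓ k := by
  simp [Pset, Set.mem_pi]

lemma mem_Pset_jfun (k : ℕ) (x : Fin n → ℝ) : x ∈ Pset n c ℓ k (jfun n c ℓ k x) := by
  rw [mem_Pset_iff hl]
  intro i
  have hs := sc_pos hl (ℓ := ℓ) k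
  set s := sc ℓ k
  set u := x i - (c i - ℓ / 2) with hu
  have h1 : (⌊u / s⌋ : ℝ) ≤ u / s := Int.floor_le _
  have h2 : u / s < ⌊u / s⌋ + 1 := Int.lt_floor_add_one _
  constructor
  · have := (le_div_iff₀ hs).1 h1
    simp only [bse, jfun, ← hu]
    linarith
  · have := (div_lt_iff₀ hs).1 h2
    simp only [bse, jfun, ← hu]
    nlinarith

lemma jfun_eq_of_mem {k : ℕ} {j : Fin n → ℤ} {x : Fin n → ℝ} (hx : x ∈ Pset n c ℓ k j) :
    jfun n c ℓ k x = j := by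
  funext i
  rw [mem_Pset_iff hl] at hx
  obtain ⟨h1, h2⟩ := hx i
  have hs := sc_pos hl (ℓ := ℓ) k
  rw [jfun, Int.floor_eq_iff]
  rw [bse] at h1 h2
  constructor
  · rw [le_div_iff₀ hs]; linarith
  · rw [div_lt_iff₀ hs]; push_cast; nlinarith

lemma Pset_disjoint {k : ℕ} {j j' : Fin n → ℤ} (h : j ≠ j') :
    Disjoint (Pset n c ℓ k j) (Pset n c ℓ k j') := by
  rw [Set.disjoint_left]
  intro x hx hx'
  exact h ((jfun_eq_of_mem hl hx).symm.trans (jfun_eq_of_mem hl hx'))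

lemma nested_interval {K d : ℕ} {j₀ j : Fin n → ℤ} {x : Fin n → ℝ}
    (hx0 : x ∈ Pset n c ℓ K j₀) (hx : x ∈ Pset n c ℓ (K + d) j) (i : Fin n) :
    bse n c ℓ K j₀ i ≤ bse n c ℓ (K + d) j i ∧
      bse n c ℓ (K + d) j i + sc ℓ (K + d) ≤ bse n c ℓ K j₀ i + sc ℓ K := by
  rw [mem_Pset_iff hl] at hx0 hx
  obtain ⟨h1, h2⟩ := hx0 i
  obtain ⟨h3, h4⟩ := hx i
  have hs' : 0 < sc ℓ (K + d) := sc_pos hl _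
  have hsd : sc ℓ K = 2 ^ d * sc ℓ (K + d) := sc_add hl K d
  rw [bse] at h1 h2 h3 h4
  set s' := sc ℓ (K + d) with hs'def
  have e1 : (j₀ i : ℝ) * (2 ^ d * s') ≤ x i - (c i - ℓ / 2) := by
    rw [← hsd]; linarith
  have e2 : x i - (c i - ℓ / 2) < ((j₀ i : ℝ) + 1) * (2 ^ d * s') := by
    have : x i - (c i - ℓ / 2) < (j₀ i : ℝ) * sc ℓ K + sc ℓ K := by linarith
    rw [hsd] at this; nlinarith
  have e3 : (j i : ℝ) * s' ≤ x i - (c i - ℓ / 2) := by linarith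
  have e4 : x i - (c i - ℓ / 2) < ((j i : ℝ) + 1) * s' := by nlinarith
  have hint1 : j₀ i * 2 ^ d ≤ j i := by
    have hr : (j₀ i : ℝ) * 2 ^ d * s' < ((j i : ℝ) + 1) * s' := by nlinarith
    have hr2 : (j₀ i : ℝ) * 2 ^ d < (j i : ℝ) + 1 := lt_of_mul_lt_mul_right hr hs'.le
    have hr3 : (j₀ i * 2 ^ d : ℤ) < j i + 1 := by exact_mod_cast hr2
    exact Int.lt_add_one_iff.1 hr3
  have hint2 : j i + 1 ≤ (j₀ i + 1) * 2 ^ d := by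
    have hr : (j i : ℝ) * s' < ((j₀ i : ℝ) + 1) * 2 ^ d * s' := by nlinarith
    have hr2 : (j i : ℝ) < ((j₀ i : ℝ) + 1) * 2 ^ d := lt_of_mul_lt_mul_right hr hs'.le
    have hr3 : (j i : ℤ) < (j₀ i + 1) * 2 ^ d := by exact_mod_cast hr2
    exact Int.add_one_le_iff.2 hr3
  have c1 : (j₀ i : ℝ) * 2 ^ d ≤ (j i : ℝ) := by exact_mod_cast hint1
  have c2 : (j i : ℝ) + 1 ≤ ((j₀ i : ℝ) + 1) * 2 ^ d := by exact_mod_cast hint2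
  constructor
  · rw [bse, bse, hsd, ← hs'def]
    nlinarith [mul_le_mul_of_nonneg_right c1 hs'.le]
  · rw [bse, bse, hsd, ← hs'def]
    nlinarith [mul_le_mul_of_nonneg_right c2 hs'.le]

lemma Pset_nested {K d : ℕ} {j₀ j : Fin n → ℤ} {x : Fin n → ℝ}
    (hx0 : x ∈ Pset n c ℓ K j₀) (hx : x ∈ Pset n c ℓ (K + d) j) :
    Pset n c ℓ (K + d) j ⊆ Pset n c ℓ K j₀ := by
  intro y hy
  rw [mem_Pset_iff hl] at hy ⊢
  intro i
  obtain ⟨h1, h2⟩ := nested_interval hl hx0 hx i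
  obtain ⟨h3, h4⟩ := hy i
  exact ⟨le_trans h1 h3, lt_of_lt_of_le h4 h2⟩

omit hl

lemma measurableSet_Pset (k : ℕ) (j : Fin n → ℤ) : MeasurableSet (Pset n c ℓ k j) :=
  MeasurableSet.univ_pi fun i => measurableSet_Ico

lemma volume_Pset (k : ℕ) (j : Fin n → ℤ) :
    volume (Pset n c ℓ k j) = ENNReal.ofReal (sc ℓ k) ^ n := by
  rw [Pset, volume_pi_pi]
  simp [Real.volume_Ico]

end Geometry

/-! ### The coefficients and the dominating function -/

section Coeff

variable (n : ℕ) (F : (Fin n → ℝ) → ℝ → ℝ) (c : Fin n → ℝ) (ℓ : ℝ)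

/-- the Whitney region associated to a dyadic cube: triple cube × top dyadic heights -/
def Eset (k : ℕ) (j : Fin n → ℤ) : Set ((Fin n → ℝ) × ℝ) :=
  (Set.univ.pi fun i => Set.Ico (bse n c ℓ k j i - sc ℓ k) (bse n c ℓ k j i + 2 * sc ℓ k)) ×ˢ
    Set.Ioc (sc ℓ (k + 1)) (sc ℓ k)

/-- the coefficient of a dyadic cube -/
noncomputable def bco (k : ℕ) (j : Fin n → ℤ) : ℝ≥0∞ :=
  ∫⁻ p in Eset n c ℓ k j, ENNReal.ofReal ((2 / sc ℓ k) ^ (n + 1) * F p.1 p.2 ^ 2)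

/-- the level-`k` piece of the dominating function -/
noncomputable def cc (k : ℕ) (x : Fin n → ℝ) : ℝ≥0∞ :=
  bco n F c ℓ k (jfun n c ℓ k x)

/-- the dominating function, starting from level `K` -/
noncomputable def tg (K : ℕ) (x : Fin n → ℝ) : ℝ≥0∞ := ∑' k, cc n F c ℓ (K + k) x

variable {n F c ℓ}

lemma measurableSet_Eset (k : ℕ) (j : Fin n → ℤ) : MeasurableSet (Eset n c ℓ k j) :=
  ((MeasurableSet.univ_pi fun i => measurableSet_Ico).prod measurableSet_Ioc)

lemma measurable_jfun (k : ℕ) : Measurable (jfun n c ℓ k) := by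
  apply measurable_pi_lambda
  intro i
  apply Measurable.floor
  exact ((measurable_pi_apply i).sub_const _).div_const _

lemma measurable_cc (k : ℕ) : Measurable (cc n F c ℓ k) :=
  (measurable_of_countable _).comp (measurable_jfun k)

lemma measurable_tg (K : ℕ) : Measurable (tg n F c ℓ K) :=
  Measurable.ennreal_tsum fun k => measurable_cc _

end Coeff

/-! ### Slab decomposition of the local square function -/

section Slab

variable {n : ℕ} {F : (Fin n → ℝ) → ℝ → ℝ} {c : Fin n → ℝ} {ℓ : ℝ}

/-- the level-`k` slab of the cone region -/
def Sl (ℓ : ℝ) (k : ℕ) (x : Fin n → ℝ) : Set ((Fin n → ℝ) × ℝ) :=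
  {p | dist x p.1 < p.2 ∧ p.2 ∈ Set.Ioc (sc ℓ (k + 1)) (sc ℓ k)}

lemma measurableSet_Sl (k : ℕ) (x : Fin n → ℝ) : MeasurableSet (Sl (n := n) ℓ k x) := by
  have h1 : MeasurableSet {p : (Fin n → ℝ) × ℝ | dist x p.1 < p.2} :=
    (isOpen_lt (continuous_const.dist continuous_fst) continuous_snd).measurableSet
  exact h1.inter (measurable_snd measurableSet_Ioc)

lemma sc_succ (hl : 0 < ℓ) (k : ℕ) : sc ℓ (k + 1) = sc ℓ k / 2 := by
  rw [sc, sc, pow_succ]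
  ring

lemma slab_le (hl : 0 < ℓ) (k : ℕ) (x : Fin n → ℝ) :
    ∫⁻ p in Sl (n := n) ℓ k x, ENNReal.ofReal (F p.1 p.2 ^ 2 / p.2 ^ (n + 1)) ≤
      cc n F c ℓ k x := by
  have hs : 0 < sc ℓ k := sc_pos hl k
  have hs1 : 0 < sc ℓ (k + 1) := sc_pos hl (k + 1)
  have hxj : x ∈ Pset n c ℓ k (jfun n c ℓ k x) := mem_Pset_jfun hl k x
  have hsub : Sl (n := n) ℓ k x ⊆ Eset n c ℓ k (jfun n c ℓ k x) := by
    rintro ⟨y, t⟩ ⟨hd, ht1, ht2⟩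
    have ht0 : 0 < t := lt_trans hs1 ht1
    refine ⟨?_, ht1, ht2⟩
    intro i _
    have hdi : dist (x i) (y i) < t := (dist_pi_lt_iff ht0).1 hd i
    rw [Real.dist_eq, abs_lt] at hdi
    have hxi := (mem_Pset_iff hl).1 hxj i
    constructor
    · linarith [hxi.1, hxi.2, hdi.1, hdi.2, ht2]
    · linarith [hxi.1, hxi.2, hdi.1, hdi.2, ht2]
  calc ∫⁻ p in Sl (n := n) ℓ k x, ENNReal.ofReal (F p.1 p.2 ^ 2 / p.2 ^ (n + 1))
      ≤ ∫⁻ p in Sl (n := n) ℓ k x,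
          ENNReal.ofReal ((2 / sc ℓ k) ^ (n + 1) * F p.1 p.2 ^ 2) := by
        refine setLIntegral_mono' (measurableSet_Sl k x) ?_
        rintro ⟨y, t⟩ ⟨hd, ht1, ht2⟩
        apply ENNReal.ofReal_le_ofReal
        have ht0 : 0 < t := lt_trans hs1 ht1
        rw [sc_succ hl] at ht1
        have h1 : (sc ℓ k / 2) ^ (n + 1) ≤ t ^ (n + 1) :=
          pow_le_pow_left₀ (by positivity) ht1.le _
        have h2 : F y t ^ 2 / t ^ (n + 1) ≤ F y t ^ 2 / (sc ℓ k / 2) ^ (n + 1) :=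
          div_le_div_of_nonneg_left (sq_nonneg _) (by positivity) h1
        refine h2.trans (le_of_eq ?_)
        rw [div_pow, div_pow]
        field_simp
    _ ≤ ∫⁻ p in Eset n c ℓ k (jfun n c ℓ k x),
          ENNReal.ofReal ((2 / sc ℓ k) ^ (n + 1) * F p.1 p.2 ^ 2) :=
        lintegral_mono_set hsub
    _ = cc n F c ℓ k x := rfl

lemma region_subset_slabs (hl : 0 < ℓ) (x : Fin n → ℝ) :
    {p : (Fin n → ℝ) × ℝ | dist x p.1 < p.2 ∧ p.2 < ℓ} ⊆ ⋃ k, Sl (n := n) ℓ k x := by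
  rintro ⟨y, t⟩ ⟨hd, htl⟩
  have ht0 : 0 < t := lt_of_le_of_lt dist_nonneg hd
  have hex : ∃ k, sc ℓ k < t := by
    obtain ⟨k, hk⟩ := pow_unbounded_of_one_lt (ℓ / t) one_lt_two
    exact ⟨k, by rw [sc]; rwa [div_lt_iff₀ (by positivity), mul_comm, ← div_lt_iff₀ ht0]⟩
  classical
  have hfind := Nat.find_spec hex
  have hne : Nat.find hex ≠ 0 := by
    intro h
    rw [h, sc_zero hl] at hfind
    exact absurd hfind (not_lt.2 htl.le)
  obtain ⟨k, hk⟩ := Nat.exists_eq_succ_of_ne_zero hne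
  have hmin : ¬ sc ℓ k < t := Nat.find_min hex (by omega)
  rw [hk] at hfind
  exact Set.mem_iUnion.2 ⟨k, hd, hfind, not_lt.1 hmin⟩

lemma localSq_le_tg (hl : 0 < ℓ) (x : Fin n → ℝ) :
    localSqSq n F ℓ x ≤ tg n F c ℓ 0 x := by
  have h1 : localSqSq n F ℓ x ≤
      ∑' k, ∫⁻ p in Sl (n := n) ℓ k x, ENNReal.ofReal (F p.1 p.2 ^ 2 / p.2 ^ (n + 1)) := by
    rw [localSqSq]
    refine le_trans (lintegral_mono_set (region_subset_slabs hl x)) ?_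
    exact lintegral_iUnion_le _ _
  refine h1.trans ?_
  rw [tg]
  refine ENNReal.tsum_le_tsum fun k => ?_
  rw [zero_add]
  exact slab_le (c := c) hl k x

end Slab

/-! ### The Carleson measure estimate -/

section Carleson

variable {n : ℕ} {F : (Fin n → ℝ) → ℝ → ℝ} {C₀ : ℝ}

lemma measurable_fp (hF : Measurable (Function.uncurry F)) :
    Measurable fun p : (Fin n → ℝ) × ℝ =>
      ENNReal.ofReal (F p.1 p.2 ^ 2 / p.2 ^ (n + 1)) := by
  have h1 : Measurable fun p : (Fin n → ℝ) × ℝ => F p.1 p.2 := hF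
  exact ((h1.pow_const 2).div (measurable_snd.pow_const (n + 1))).ennreal_ofReal

lemma lemA (hF : Measurable (Function.uncurry F))
    (hyp : ∀ (z : Fin n → ℝ) (L : ℝ), 0 < L →
      ∫⁻ x in ball z (L / 2), localSqSq n F L x ≤ ENNReal.ofReal (C₀ * L ^ n))
    (z : Fin n → ℝ) {s : ℝ} (hs : 0 < s) :
    ∫⁻ p in {p : (Fin n → ℝ) × ℝ | dist z p.1 < s ∧ 0 < p.2 ∧ p.2 < 2 * s},
      ENNReal.ofReal (F p.1 p.2 ^ 2 / p.2) ≤ ENNReal.ofReal (C₀ * (6 * s) ^ n) := by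
  classical
  set fp : (Fin n → ℝ) × ℝ → ℝ≥0∞ :=
    fun p => ENNReal.ofReal (F p.1 p.2 ^ 2 / p.2 ^ (n + 1)) with hfp_def
  have hfp : Measurable fp := measurable_fp hF
  set B : Set (Fin n → ℝ) := ball z (3 * s) with hB_def
  set U : Set ((Fin n → ℝ) × ((Fin n → ℝ) × ℝ)) :=
    {q | q.1 ∈ B ∧ dist q.1 q.2.1 < q.2.2 ∧ q.2.2 < 6 * s} with hU_def
  have hUopen : IsOpen U := by
    refine IsOpen.inter (isOpen_ball.preimage continuous_fst) (IsOpen.inter ?_ ?_)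
    · exact isOpen_lt (continuous_fst.dist (continuous_fst.comp continuous_snd))
        ((continuous_snd.comp continuous_snd))
    · exact isOpen_lt (continuous_snd.comp continuous_snd) continuous_const
  have hU : MeasurableSet U := hUopen.measurableSet
  have hHmeas : Measurable fun q : (Fin n → ℝ) × ((Fin n → ℝ) × ℝ) =>
      U.indicator (fun q => fp q.2) q := (hfp.comp measurable_snd).indicator hU
  -- Step 1 : rewrite the L² hypothesis integral
  have step1 : ∫⁻ x in B, localSqSq n F (6 * s) x =
      ∫⁻ x, ∫⁻ p, U.indicator (fun q => fp q.2) (x, p) := by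
    rw [← lintegral_indicator measurableSet_ball]
    refine lintegral_congr fun x => ?_
    by_cases hx : x ∈ B
    · rw [Set.indicator_of_mem hx, localSqSq]
      have hSx : MeasurableSet {p : (Fin n → ℝ) × ℝ | dist x p.1 < p.2 ∧ p.2 < 6 * s} := by
        refine MeasurableSet.inter ?_ ?_
        · exact (isOpen_lt (continuous_const.dist continuous_fst) continuous_snd).measurableSet
        · exact measurable_snd measurableSet_Iio
      rw [← lintegral_indicator hSx]
      refine lintegral_congr fun p => ?_
      by_cases hp : p ∈ {p : (Fin n → ℝ) × ℝ | dist x p.1 < p.2 ∧ p.2 < 6 * s}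
      · rw [Set.indicator_of_mem hp, Set.indicator_of_mem (by exact ⟨hx, hp.1, hp.2⟩)]
      · rw [Set.indicator_of_notMem hp, Set.indicator_of_notMem (by
          intro hq
          exact hp ⟨hq.2.1, hq.2.2⟩)]
    · rw [Set.indicator_of_notMem hx]
      symm
      have : ∀ p : (Fin n → ℝ) × ℝ, U.indicator (fun q => fp q.2) (x, p) = 0 := by
        intro p
        exact Set.indicator_of_notMem (fun hq => hx hq.1) _
      simp only [this, lintegral_zero]
  -- Step 2 : Tonelli
  have step2 : ∫⁻ x, ∫⁻ p, U.indicator (fun q => fp q.2) (x, p) =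
      ∫⁻ p, ∫⁻ x, U.indicator (fun q => fp q.2) (x, p) :=
    lintegral_lintegral_swap hHmeas.aemeasurable
  -- Step 3 : pointwise lower bound on the inner integral
  have step3 : ∀ p : (Fin n → ℝ) × ℝ,
      p ∈ {p : (Fin n → ℝ) × ℝ | dist z p.1 < s ∧ 0 < p.2 ∧ p.2 < 2 * s} →
      ENNReal.ofReal (F p.1 p.2 ^ 2 / p.2) ≤
        ∫⁻ x, U.indicator (fun q => fp q.2) (x, p) := by
    rintro ⟨y, t⟩ ⟨hyz, ht0, ht2⟩
    set r : ℝ := min t s with hr_def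
    have hr : 0 < r := lt_min ht0 hs
    have hballs : ∀ x ∈ ball y r, U.indicator (fun q => fp q.2) (x, (y, t)) = fp (y, t) := by
      intro x hx
      rw [mem_ball] at hx
      refine Set.indicator_of_mem ?_ _
      refine ⟨?_, ?_, ?_⟩
      · rw [hB_def, mem_ball]
        calc dist x z ≤ dist x y + dist y z := dist_triangle _ _ _
          _ < r + s := add_lt_add hx (by rw [dist_comm]; exact hyz)
          _ ≤ 2 * s := by
              have : r ≤ s := min_le_right _ _
              linarith
          _ < 3 * s := by linarith
      · simpa using lt_of_lt_of_le hx (min_le_left _ _)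
      · show t < 6 * s
        linarith
    calc ENNReal.ofReal (F y t ^ 2 / t)
        ≤ fp (y, t) * volume (ball y r) := by
          rw [Real.volume_pi_ball y hr, hfp_def]
          simp only [Fintype.card_fin]
          rw [← ENNReal.ofReal_mul (by positivity)]
          apply ENNReal.ofReal_le_ofReal
          have h2r : t ≤ 2 * r := by
            rcases le_total t s with h | h
            · rw [hr_def, min_eq_left h]; linarith
            · rw [hr_def, min_eq_right h]; linarith
          have htn : t ^ n ≤ (2 * r) ^ n := pow_le_pow_left₀ ht0.le h2r n
          have heq : F y t ^ 2 / t = F y t ^ 2 * t ^ n / t ^ (n + 1) := by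
            rw [pow_succ]
            field_simp
            ring
          rw [heq, show F y t ^ 2 / t ^ (n + 1) * (2 * r) ^ n
            = F y t ^ 2 * (2 * r) ^ n / t ^ (n + 1) from by ring]
          gcongr
      _ = ∫⁻ x in ball y r, fp (y, t) := by rw [setLIntegral_const, mul_comm]
      _ = ∫⁻ x in ball y r, U.indicator (fun q => fp q.2) (x, (y, t)) :=
          (setLIntegral_congr_fun measurableSet_ball
            (fun x hx => (hballs x hx).symm))
      _ ≤ ∫⁻ x, U.indicator (fun q => fp q.2) (x, (y, t)) :=
          setLIntegral_le_lintegral _ _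
  -- put things together
  have hRmeas : MeasurableSet {p : (Fin n → ℝ) × ℝ | dist z p.1 < s ∧ 0 < p.2 ∧ p.2 < 2 * s} := by
    refine MeasurableSet.inter ?_ (MeasurableSet.inter ?_ ?_)
    · exact (isOpen_lt (continuous_const.dist continuous_fst) continuous_const).measurableSet
    · exact measurable_snd measurableSet_Ioi
    · exact measurable_snd measurableSet_Iio
  calc ∫⁻ p in {p : (Fin n → ℝ) × ℝ | dist z p.1 < s ∧ 0 < p.2 ∧ p.2 < 2 * s},
        ENNReal.ofReal (F p.1 p.2 ^ 2 / p.2)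
      ≤ ∫⁻ p in {p : (Fin n → ℝ) × ℝ | dist z p.1 < s ∧ 0 < p.2 ∧ p.2 < 2 * s},
          ∫⁻ x, U.indicator (fun q => fp q.2) (x, p) :=
        setLIntegral_mono' hRmeas step3
    _ ≤ ∫⁻ p, ∫⁻ x, U.indicator (fun q => fp q.2) (x, p) := setLIntegral_le_lintegral _ _
    _ = ∫⁻ x in B, localSqSq n F (6 * s) x := by rw [step1, step2]
    _ ≤ ENNReal.ofReal (C₀ * (6 * s) ^ n) := by
        have h6 : (6 : ℝ) * s / 2 = 3 * s := by ring
        have := hyp z (6 * s) (by positivity)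
        rwa [h6] at this

end Carleson

/-! ### The packing estimate -/

section Pack

variable {n : ℕ} {F : (Fin n → ℝ) → ℝ → ℝ} {c : Fin n → ℝ} {ℓ : ℝ} {C₀ : ℝ}

/-- translation of a dyadic index by an offset in `{-1,0,1}^n` -/
def τ (o : Fin n → Fin 3) (j : Fin n → ℤ) : Fin n → ℤ := fun i => j i + (o i : ℤ) - 1

lemma τ_inj (o : Fin n → Fin 3) {j j' : Fin n → ℤ} (h : τ o j = τ o j') : j = j' := by
  funext i
  have := congrFun h i
  simp only [τ] at this
  omega

lemma bse_τ (o : Fin n → Fin 3) (j : Fin n → ℤ) (k : ℕ) (i : Fin n) :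
    bse n c ℓ k (τ o j) i = bse n c ℓ k j i + ((o i : ℝ) - 1) * sc ℓ k := by
  simp only [bse, τ]
  push_cast
  ring

lemma pack (hl : 0 < ℓ) (hC₀ : 0 < C₀) (hF : Measurable (Function.uncurry F))
    (hyp : ∀ (z : Fin n → ℝ) (L : ℝ), 0 < L →
      ∫⁻ x in ball z (L / 2), localSqSq n F L x ≤ ENNReal.ofReal (C₀ * L ^ n))
    (K : ℕ) (j₀ : Fin n → ℤ) :
    ∑' (d : ℕ), ∑' (j : Fin n → ℤ),
        bco n F c ℓ (K + d) j * volume (Pset n c ℓ K j₀ ∩ Pset n c ℓ (K + d) j) ≤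
      ENNReal.ofReal (2 ^ (n + 1) * 36 ^ n * C₀) * volume (Pset n c ℓ K j₀) := by
  classical
  have hsK : 0 < sc ℓ K := sc_pos hl K
  set z : Fin n → ℝ := fun i => bse n c ℓ K j₀ i + sc ℓ K / 2 with hz_def
  set BIG : Set (Fin n → ℝ) := ball z (2 * sc ℓ K) with hBIG_def
  set g2 : (Fin n → ℝ) × ℝ → ℝ≥0∞ :=
    fun p => ENNReal.ofReal (2 ^ (n + 1) * (F p.1 p.2 ^ 2 / p.2)) with hg2_def
  set A : ℕ → (Fin n → Fin 3) → (Fin n → ℤ) → Set ((Fin n → ℝ) × ℝ) :=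
    fun d o j => (Pset n c ℓ (K + d) (τ o j) ∩ BIG) ×ˢ
      Set.Ioc (sc ℓ (K + d + 1)) (sc ℓ (K + d)) with hA_def
  have hAmeas : ∀ d o j, MeasurableSet (A d o j) := fun d o j =>
    ((measurableSet_Pset _ _).inter measurableSet_ball).prod measurableSet_Ioc
  -- step (b') : individual term bound
  have hb : ∀ (d : ℕ) (j : Fin n → ℤ),
      bco n F c ℓ (K + d) j * volume (Pset n c ℓ K j₀ ∩ Pset n c ℓ (K + d) j) ≤
        ∑' (o : Fin n → Fin 3), ∫⁻ p in A d o j, g2 p := by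
    intro d j
    by_cases hne : (Pset n c ℓ K j₀ ∩ Pset n c ℓ (K + d) j).Nonempty
    · obtain ⟨x₀, hx₀, hx₀'⟩ := hne
      have hsub := Pset_nested hl hx₀ hx₀'
      have hint : Pset n c ℓ K j₀ ∩ Pset n c ℓ (K + d) j = Pset n c ℓ (K + d) j :=
        Set.inter_eq_self_of_subset_right hsub
      have hs' : 0 < sc ℓ (K + d) := sc_pos hl _
      have hs'K : sc ℓ (K + d) ≤ sc ℓ K := sc_anti hl (Nat.le_add_right K d)
      rw [hint, volume_Pset, bco]
      have hCne : (ENNReal.ofReal (sc ℓ (K + d)) ^ n) ≠ ∞ := by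
        exact (pow_ne_top ENNReal.ofReal_ne_top)
      rw [← lintegral_mul_const' _ _ hCne]
      -- pointwise bound on Eset, then split into translated cubes
      have hpt : ∀ p ∈ Eset n c ℓ (K + d) j,
          ENNReal.ofReal ((2 / sc ℓ (K + d)) ^ (n + 1) * F p.1 p.2 ^ 2) *
            ENNReal.ofReal (sc ℓ (K + d)) ^ n ≤ g2 p := by
        rintro ⟨y, t⟩ ⟨hy, ht1, ht2⟩
        have ht0 : 0 < t := lt_trans (sc_pos hl _) ht1
        rw [← ENNReal.ofReal_pow hs'.le, ← ENNReal.ofReal_mul (by positivity)]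
        apply ENNReal.ofReal_le_ofReal
        have key : (2 / sc ℓ (K + d)) ^ (n + 1) * sc ℓ (K + d) ^ n =
            2 ^ (n + 1) / sc ℓ (K + d) := by
          rw [div_pow, pow_succ (sc ℓ (K + d)) n]
          field_simp
        calc (2 / sc ℓ (K + d)) ^ (n + 1) * F y t ^ 2 * sc ℓ (K + d) ^ n
            = 2 ^ (n + 1) * (F y t ^ 2 / sc ℓ (K + d)) := by
              rw [show (2 / sc ℓ (K + d)) ^ (n + 1) * F y t ^ 2 * sc ℓ (K + d) ^ n
                = ((2 / sc ℓ (K + d)) ^ (n + 1) * sc ℓ (K + d) ^ n) * F y t ^ 2 from by ring,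
                key]
              ring
          _ ≤ 2 ^ (n + 1) * (F y t ^ 2 / t) := by gcongr
      have hcover : Eset n c ℓ (K + d) j ⊆ ⋃ (o : Fin n → Fin 3), A d o j := by
        rintro ⟨y, t⟩ ⟨hy, htIoc⟩
        simp only [Set.mem_pi, Set.mem_univ, forall_true_left, Set.mem_Ico] at hy
        set β : Fin n → ℝ := bse n c ℓ (K + d) j with hβ
        refine Set.mem_iUnion.2 ⟨fun i =>
          if y i < β i then 0 else if y i < β i + sc ℓ (K + d) then 1 else 2, ?_, htIoc⟩
        constructor
        · -- y in the translated cube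
          intro i _
          have hyi := hy i
          simp only [Set.mem_Ico, bse_τ]
          by_cases h0 : y i < β i
          · rw [if_pos h0]
            have hcast : ((0 : Fin 3) : ℝ) = 0 := by norm_num
            rw [hcast]
            simp only [← hβ]
            constructor
            · linarith [hyi.1]
            · linarith
          · by_cases h1 : y i < β i + sc ℓ (K + d)
            · rw [if_neg h0, if_pos h1]
              have hcast : ((1 : Fin 3) : ℝ) = 1 := by norm_num
              rw [hcast]
              simp only [← hβ]
              constructor
              · linarith [not_lt.1 h0]
              · linarith
            · rw [if_neg h0, if_neg h1]
              have hcast : ((2 : Fin 3) : ℝ) = 2 := by norm_num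
              rw [hcast]
              simp only [← hβ]
              constructor
              · linarith [not_lt.1 h1]
              · linarith [hyi.2]
        · -- y ∈ BIG
          rw [hBIG_def, mem_ball]
          rw [dist_pi_lt_iff (by positivity)]
          intro i
          have hyi := hy i
          have hni := nested_interval hl hx₀ hx₀' i
          rw [Real.dist_eq, abs_lt]
          constructor <;>
            [skip; skip] <;>
            · simp only [hz_def, ← hβ]
              have h1 := hni.1
              have h2 := hni.2
              have h3 := hyi.1
              have h4 := hyi.2
              simp only [← hβ] at h1 h2 h3 h4 ⊢
              nlinarith [hs'.le, hs'K, hsK]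
      calc ∫⁻ p in Eset n c ℓ (K + d) j,
            ENNReal.ofReal ((2 / sc ℓ (K + d)) ^ (n + 1) * F p.1 p.2 ^ 2) *
              ENNReal.ofReal (sc ℓ (K + d)) ^ n
          ≤ ∫⁻ p in Eset n c ℓ (K + d) j, g2 p :=
            setLIntegral_mono' (measurableSet_Eset _ _) hpt
        _ ≤ ∫⁻ p in ⋃ (o : Fin n → Fin 3), A d o j, g2 p := lintegral_mono_set hcover
        _ ≤ ∑' (o : Fin n → Fin 3), ∫⁻ p in A d o j, g2 p := lintegral_iUnion_le _ _
    · rw [Set.not_nonempty_iff_eq_empty.1 hne]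
      simp
  -- step (c) : sum over j for fixed d, o
  have hc : ∀ (d : ℕ) (o : Fin n → Fin 3),
      ∑' (j : Fin n → ℤ), ∫⁻ p in A d o j, g2 p ≤
        ∫⁻ p in BIG ×ˢ Set.Ioc (sc ℓ (K + d + 1)) (sc ℓ (K + d)), g2 p := by
    intro d o
    have hdisj : Pairwise (Function.onFun Disjoint (A d o)) := by
      intro j j' hjj'
      have : Disjoint (Pset n c ℓ (K + d) (τ o j)) (Pset n c ℓ (K + d) (τ o j')) :=
        Pset_disjoint hl (fun h => hjj' (τ_inj o h))
      rw [Function.onFun, Set.disjoint_left]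
      rintro ⟨y, t⟩ hp hp'
      exact Set.disjoint_left.1 this hp.1.1 hp'.1.1
    rw [← lintegral_iUnion (hAmeas d o) hdisj]
    apply lintegral_mono_set
    refine Set.iUnion_subset fun j => ?_
    rintro ⟨y, t⟩ ⟨⟨_, hyB⟩, ht⟩
    exact ⟨hyB, ht⟩
  -- step (e) : sum over d
  have he : ∑' (d : ℕ), ∫⁻ p in BIG ×ˢ Set.Ioc (sc ℓ (K + d + 1)) (sc ℓ (K + d)), g2 p ≤
      ∫⁻ p in {p : (Fin n → ℝ) × ℝ | dist z p.1 < 2 * sc ℓ K ∧ 0 < p.2 ∧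
        p.2 < 2 * (2 * sc ℓ K)}, g2 p := by
    have hdisj : Pairwise (Function.onFun Disjoint
        (fun d => BIG ×ˢ Set.Ioc (sc ℓ (K + d + 1)) (sc ℓ (K + d)))) := by
      intro d d' hdd'
      rw [Function.onFun, Set.disjoint_left]
      rintro ⟨y, t⟩ ⟨_, ht⟩ ⟨_, ht'⟩
      rcases lt_or_gt_of_ne hdd' with h | h
      · have : sc ℓ (K + d') ≤ sc ℓ (K + d + 1) := sc_anti hl (by omega)
        exact absurd (lt_of_le_of_lt (ht'.2.trans this) ht.1) (lt_irrefl t)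
      · have : sc ℓ (K + d) ≤ sc ℓ (K + d' + 1) := sc_anti hl (by omega)
        exact absurd (lt_of_le_of_lt (ht.2.trans this) ht'.1) (lt_irrefl t)
    rw [← lintegral_iUnion
      (fun d => measurableSet_ball.prod measurableSet_Ioc) hdisj]
    apply lintegral_mono_set
    refine Set.iUnion_subset fun d => ?_
    rintro ⟨y, t⟩ ⟨hyB, ht1, ht2⟩
    refine ⟨?_, lt_trans (sc_pos hl _) ht1, ?_⟩
    · rw [dist_comm]
      exact mem_ball.1 hyB
    · have : sc ℓ (K + d) ≤ sc ℓ K := sc_anti hl (Nat.le_add_right K d)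
      show t < 2 * (2 * sc ℓ K)
      nlinarith [hsK]
  -- step (f) : Carleson bound
  have hf2 : ∫⁻ p in {p : (Fin n → ℝ) × ℝ | dist z p.1 < 2 * sc ℓ K ∧ 0 < p.2 ∧
      p.2 < 2 * (2 * sc ℓ K)}, g2 p ≤
      ENNReal.ofReal (2 ^ (n + 1)) * ENNReal.ofReal (C₀ * (6 * (2 * sc ℓ K)) ^ n) := by
    have hg2eq : ∀ p : (Fin n → ℝ) × ℝ, g2 p =
        ENNReal.ofReal (2 ^ (n + 1)) * ENNReal.ofReal (F p.1 p.2 ^ 2 / p.2) := by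
      intro p
      rw [hg2_def, ← ENNReal.ofReal_mul (by positivity)]
    calc ∫⁻ p in {p : (Fin n → ℝ) × ℝ | dist z p.1 < 2 * sc ℓ K ∧ 0 < p.2 ∧
          p.2 < 2 * (2 * sc ℓ K)}, g2 p
        = ENNReal.ofReal (2 ^ (n + 1)) * ∫⁻ p in {p : (Fin n → ℝ) × ℝ |
            dist z p.1 < 2 * sc ℓ K ∧ 0 < p.2 ∧ p.2 < 2 * (2 * sc ℓ K)},
            ENNReal.ofReal (F p.1 p.2 ^ 2 / p.2) := by
          rw [← lintegral_const_mul' _ _ ENNReal.ofReal_ne_top]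
          exact lintegral_congr fun p => hg2eq p
      _ ≤ ENNReal.ofReal (2 ^ (n + 1)) * ENNReal.ofReal (C₀ * (6 * (2 * sc ℓ K)) ^ n) := by
          gcongr
          exact lemA hF hyp z (by positivity)
  -- put everything together
  calc ∑' (d : ℕ), ∑' (j : Fin n → ℤ),
        bco n F c ℓ (K + d) j * volume (Pset n c ℓ K j₀ ∩ Pset n c ℓ (K + d) j)
      ≤ ∑' (d : ℕ), ∑' (j : Fin n → ℤ), ∑' (o : Fin n → Fin 3), ∫⁻ p in A d o j, g2 p :=
        ENNReal.tsum_le_tsum fun d => ENNReal.tsum_le_tsum fun j => hb d j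
    _ = ∑' (d : ℕ), ∑' (o : Fin n → Fin 3), ∑' (j : Fin n → ℤ), ∫⁻ p in A d o j, g2 p :=
        tsum_congr fun d => ENNReal.tsum_comm
    _ ≤ ∑' (d : ℕ), ∑' (_ : Fin n → Fin 3),
          ∫⁻ p in BIG ×ˢ Set.Ioc (sc ℓ (K + d + 1)) (sc ℓ (K + d)), g2 p :=
        ENNReal.tsum_le_tsum fun d => ENNReal.tsum_le_tsum fun o => hc d o
    _ = ∑' (d : ℕ), (3 ^ n : ℝ≥0∞) *
          ∫⁻ p in BIG ×ˢ Set.Ioc (sc ℓ (K + d + 1)) (sc ℓ (K + d)), g2 p := by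
        refine tsum_congr fun d => ?_
        rw [tsum_fintype, Finset.sum_const, Finset.card_univ, nsmul_eq_mul]
        congr 1
        rw [Fintype.card_fun]
        push_cast
        simp
    _ = (3 ^ n : ℝ≥0∞) * ∑' (d : ℕ),
          ∫⁻ p in BIG ×ˢ Set.Ioc (sc ℓ (K + d + 1)) (sc ℓ (K + d)), g2 p :=
        ENNReal.tsum_mul_left
    _ ≤ (3 ^ n : ℝ≥0∞) * (ENNReal.ofReal (2 ^ (n + 1)) *
          ENNReal.ofReal (C₀ * (6 * (2 * sc ℓ K)) ^ n)) := by
        gcongr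
        exact he.trans hf2
    _ = ENNReal.ofReal (2 ^ (n + 1) * 36 ^ n * C₀) * volume (Pset n c ℓ K j₀) := by
        rw [volume_Pset, ← ENNReal.ofReal_pow hsK.le]
        rw [show (3 ^ n : ℝ≥0∞) = ENNReal.ofReal ((3 : ℝ) ^ n) from by
          rw [ENNReal.ofReal_pow (by norm_num)]; norm_num]
        rw [← ENNReal.ofReal_mul (by positivity), ← ENNReal.ofReal_mul (by positivity),
          ← ENNReal.ofReal_mul (by positivity)]
        congr 1
        rw [show (6 * (2 * sc ℓ K)) ^ n = 12 ^ n * sc ℓ K ^ n from by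
          rw [← mul_pow]; ring_nf]
        rw [show (36 : ℝ) ^ n = 3 ^ n * 12 ^ n from by rw [← mul_pow]; norm_num]
        ring

end Pack

/-! ### The main induction -/

section MainInd

variable {n : ℕ} {F : (Fin n → ℝ) → ℝ → ℝ} {c : Fin n → ℝ} {ℓ : ℝ}

lemma main_ind (hl : 0 < ℓ) (Λ : ℝ≥0∞)
    (hpack : ∀ (K : ℕ) (j₀ : Fin n → ℤ),
      ∑' (d : ℕ), ∑' (j : Fin n → ℤ),
          bco n F c ℓ (K + d) j * volume (Pset n c ℓ K j₀ ∩ Pset n c ℓ (K + d) j) ≤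
        Λ * volume (Pset n c ℓ K j₀)) :
    ∀ (m K : ℕ) (j₀ : Fin n → ℤ),
      ∫⁻ x in Pset n c ℓ K j₀, tg n F c ℓ K x ^ m ≤
        (Nat.factorial m : ℝ≥0∞) * Λ ^ m * volume (Pset n c ℓ K j₀) := by
  intro m
  induction m with
  | zero =>
    intro K j₀
    simp [setLIntegral_one]
  | succ m ih =>
    intro K j₀
    have hmeas_h : ∀ d : ℕ, Measurable fun x =>
        cc n F c ℓ (K + d) x * tg n F c ℓ (K + d) x ^ m := fun d =>
      (measurable_cc _).mul ((measurable_tg _).pow_const m)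
    have hpt : ∀ x, tg n F c ℓ K x ^ (m + 1) ≤
        ((m : ℝ≥0∞) + 1) * ∑' d, cc n F c ℓ (K + d) x * tg n F c ℓ (K + d) x ^ m := by
      intro x
      have htel := telescope (fun k => cc n F c ℓ (K + k) x) m
      rw [tg]
      refine htel.trans (le_of_eq ?_)
      congr 1
      refine tsum_congr fun d => ?_
      congr 2
      rw [tg]
      exact tsum_congr fun k => by rw [show K + (k + d) = K + d + k from by omega]
    have hcore : ∀ d : ℕ,
        ∫⁻ x in Pset n c ℓ K j₀, cc n F c ℓ (K + d) x * tg n F c ℓ (K + d) x ^ m ≤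
          ∑' (j : Fin n → ℤ), bco n F c ℓ (K + d) j *
            ((Nat.factorial m : ℝ≥0∞) * Λ ^ m *
              volume (Pset n c ℓ K j₀ ∩ Pset n c ℓ (K + d) j)) := by
      intro d
      have hpart : Pset n c ℓ K j₀ =
          ⋃ (j : Fin n → ℤ), (Pset n c ℓ K j₀ ∩ Pset n c ℓ (K + d) j) := by
        ext x
        constructor
        · intro hx
          exact Set.mem_iUnion.2 ⟨jfun n c ℓ (K + d) x, hx, mem_Pset_jfun hl _ x⟩
        · intro hx
          obtain ⟨j, hj, _⟩ := Set.mem_iUnion.1 hx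
          exact hj
      have hdisj : Pairwise (Function.onFun Disjoint
          fun j => Pset n c ℓ K j₀ ∩ Pset n c ℓ (K + d) j) := by
        intro j j' hjj'
        exact ((Pset_disjoint hl hjj').mono (Set.inter_subset_right)
          (Set.inter_subset_right))
      have hmeasI : ∀ j : Fin n → ℤ,
          MeasurableSet (Pset n c ℓ K j₀ ∩ Pset n c ℓ (K + d) j) := fun j =>
        (measurableSet_Pset _ _).inter (measurableSet_Pset _ _)
      calc ∫⁻ x in Pset n c ℓ K j₀, cc n F c ℓ (K + d) x * tg n F c ℓ (K + d) x ^ m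
          = ∑' (j : Fin n → ℤ), ∫⁻ x in Pset n c ℓ K j₀ ∩ Pset n c ℓ (K + d) j,
              cc n F c ℓ (K + d) x * tg n F c ℓ (K + d) x ^ m := by
            conv_lhs => rw [hpart]
            exact lintegral_iUnion hmeasI hdisj _
        _ ≤ ∑' (j : Fin n → ℤ), bco n F c ℓ (K + d) j *
              ((Nat.factorial m : ℝ≥0∞) * Λ ^ m *
                volume (Pset n c ℓ K j₀ ∩ Pset n c ℓ (K + d) j)) := by
            refine ENNReal.tsum_le_tsum fun j => ?_
            have hcc : ∫⁻ x in Pset n c ℓ K j₀ ∩ Pset n c ℓ (K + d) j,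
                cc n F c ℓ (K + d) x * tg n F c ℓ (K + d) x ^ m =
                ∫⁻ x in Pset n c ℓ K j₀ ∩ Pset n c ℓ (K + d) j,
                  bco n F c ℓ (K + d) j * tg n F c ℓ (K + d) x ^ m := by
              refine setLIntegral_congr_fun (hmeasI j) ?_
              intro x hx
              beta_reduce
              rw [cc, jfun_eq_of_mem hl hx.2]
            rw [hcc, lintegral_const_mul _ ((measurable_tg _).pow_const m)]
            gcongr
            by_cases hne : (Pset n c ℓ K j₀ ∩ Pset n c ℓ (K + d) j).Nonempty
            · obtain ⟨x₀, hx₀, hx₀'⟩ := hne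
              have hint : Pset n c ℓ K j₀ ∩ Pset n c ℓ (K + d) j =
                  Pset n c ℓ (K + d) j :=
                Set.inter_eq_self_of_subset_right (Pset_nested hl hx₀ hx₀')
              rw [hint]
              exact ih (K + d) j
            · rw [Set.not_nonempty_iff_eq_empty.1 hne]
              simp
      done
    calc ∫⁻ x in Pset n c ℓ K j₀, tg n F c ℓ K x ^ (m + 1)
        ≤ ∫⁻ x in Pset n c ℓ K j₀,
            ((m : ℝ≥0∞) + 1) * ∑' d, cc n F c ℓ (K + d) x * tg n F c ℓ (K + d) x ^ m :=
          lintegral_mono hpt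
      _ = ((m : ℝ≥0∞) + 1) * ∫⁻ x in Pset n c ℓ K j₀,
            ∑' d, cc n F c ℓ (K + d) x * tg n F c ℓ (K + d) x ^ m :=
          lintegral_const_mul _ (Measurable.ennreal_tsum hmeas_h)
      _ = ((m : ℝ≥0∞) + 1) * ∑' d, ∫⁻ x in Pset n c ℓ K j₀,
            cc n F c ℓ (K + d) x * tg n F c ℓ (K + d) x ^ m := by
          rw [lintegral_tsum fun d => (hmeas_h d).aemeasurable]
      _ ≤ ((m : ℝ≥0∞) + 1) * ∑' d, ∑' (j : Fin n → ℤ), bco n F c ℓ (K + d) j *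
            ((Nat.factorial m : ℝ≥0∞) * Λ ^ m *
              volume (Pset n c ℓ K j₀ ∩ Pset n c ℓ (K + d) j)) := by
          gcongr with d
          exact hcore d
      _ = ((m : ℝ≥0∞) + 1) * ((Nat.factorial m : ℝ≥0∞) * Λ ^ m *
            ∑' d, ∑' (j : Fin n → ℤ), bco n F c ℓ (K + d) j *
              volume (Pset n c ℓ K j₀ ∩ Pset n c ℓ (K + d) j)) := by
          congr 1
          rw [← ENNReal.tsum_mul_left]
          refine tsum_congr fun d => ?_
          rw [← ENNReal.tsum_mul_left]
          refine tsum_congr fun j => ?_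
          ring
      _ ≤ ((m : ℝ≥0∞) + 1) * ((Nat.factorial m : ℝ≥0∞) * Λ ^ m *
            (Λ * volume (Pset n c ℓ K j₀))) := by
          gcongr
          exact hpack K j₀
      _ = (Nat.factorial (m + 1) : ℝ≥0∞) * Λ ^ (m + 1) * volume (Pset n c ℓ K j₀) := by
          rw [Nat.factorial_succ]
          push_cast
          ring

end MainInd

end JNaux

/-- John–Nirenberg lemma for local square functions: a uniform `L^2` Carleson
bound `∫_Q A_{Q,F}^2 ≤ C₀ |Q|` on all cubes self-improves to
`∫_Q A_{Q,F}^p ≤ K C₀^{p/2} |Q|` for every `p > 1`. -/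
theorem stmt_3 (n : ℕ) (hn : 0 < n)
    (F : (Fin n → ℝ) → ℝ → ℝ) (hF : Measurable (Function.uncurry F))
    (hFnn : ∀ y t, 0 ≤ F y t)
    (C₀ : ℝ) (hC₀ : 0 < C₀)
    (hyp : ∀ (c : Fin n → ℝ) (ℓ : ℝ), 0 < ℓ →
      ∫⁻ x in ball c (ℓ / 2), localSqSq n F ℓ x ≤ ENNReal.ofReal (C₀ * ℓ ^ n)) :
    ∀ p : ℝ, 1 < p → ∃ K : ℝ, 0 < K ∧
      ∀ (c : Fin n → ℝ) (ℓ : ℝ), 0 < ℓ →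
        ∫⁻ x in ball c (ℓ / 2), localSqSq n F ℓ x ^ (p / 2) ≤
          ENNReal.ofReal (K * C₀ ^ (p / 2) * ℓ ^ n) := by
  intro p hp
  classical
  set m : ℕ := ⌊p / 2⌋₊ + 1 with hm_def
  have hp2 : (0 : ℝ) ≤ p / 2 := by linarith
  have hpm : p / 2 ≤ (m : ℝ) := by
    have h := Nat.lt_floor_add_one (p / 2)
    rw [hm_def]
    push_cast
    linarith
  set Λr : ℝ := 2 ^ (n + 1) * 36 ^ n * C₀ with hΛr_def
  have hΛrpos : 0 < Λr := by positivity
  have hCp : (0 : ℝ) < C₀ ^ (p / 2) := Real.rpow_pos_of_pos hC₀ _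
  refine ⟨(1 + (Nat.factorial m : ℝ) * Λr ^ m) / C₀ ^ (p / 2), by positivity, ?_⟩
  intro c ℓ hl
  have hKC : (1 + (Nat.factorial m : ℝ) * Λr ^ m) / C₀ ^ (p / 2) * C₀ ^ (p / 2) * ℓ ^ n
      = (1 + (Nat.factorial m : ℝ) * Λr ^ m) * ℓ ^ n := by
    rw [div_mul_cancel₀]
    exact hCp.ne'
  have hmain := JNaux.main_ind (F := F) (c := c) hl (ENNReal.ofReal Λr)
    (fun K j₀ => JNaux.pack hl hC₀ hF hyp K j₀) m 0 0
  have hptw : ∀ x : Fin n → ℝ, localSqSq n F ℓ x ^ (p / 2) ≤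
      1 + JNaux.tg n F c ℓ 0 x ^ m := by
    intro x
    refine le_trans (ENNReal.rpow_le_rpow (JNaux.localSq_le_tg (c := c) hl x) hp2) ?_
    exact JNaux.rpow_le_one_add_pow _ hp2 hpm
  have hball : ball c (ℓ / 2) ⊆ JNaux.Pset n c ℓ 0 0 := by
    intro x hx
    rw [mem_ball] at hx
    rw [JNaux.mem_Pset_iff hl]
    intro i
    have hxi : dist (x i) (c i) < ℓ / 2 := (dist_pi_lt_iff (by linarith)).1 hx i
    rw [Real.dist_eq, abs_lt] at hxi
    have hb : JNaux.bse n c ℓ 0 0 i = c i - ℓ / 2 := by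
      simp [JNaux.bse]
    have hsc : JNaux.sc ℓ 0 = ℓ := JNaux.sc_zero hl
    rw [hb, hsc]
    constructor
    · linarith [hxi.1]
    · linarith [hxi.2]
  have hvol : volume (JNaux.Pset n c ℓ 0 0) = ENNReal.ofReal ℓ ^ n := by
    rw [JNaux.volume_Pset, JNaux.sc_zero hl]
  calc ∫⁻ x in ball c (ℓ / 2), localSqSq n F ℓ x ^ (p / 2)
      ≤ ∫⁻ x in JNaux.Pset n c ℓ 0 0, localSqSq n F ℓ x ^ (p / 2) :=
        lintegral_mono_set hball
    _ ≤ ∫⁻ x in JNaux.Pset n c ℓ 0 0, (1 + JNaux.tg n F c ℓ 0 x ^ m) :=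
        lintegral_mono fun x => hptw x
    _ = volume (JNaux.Pset n c ℓ 0 0) +
          ∫⁻ x in JNaux.Pset n c ℓ 0 0, JNaux.tg n F c ℓ 0 x ^ m := by
        rw [lintegral_add_left measurable_const, setLIntegral_one]
    _ ≤ volume (JNaux.Pset n c ℓ 0 0) + (Nat.factorial m : ℝ≥0∞) *
          ENNReal.ofReal Λr ^ m * volume (JNaux.Pset n c ℓ 0 0) := by
        gcongr
    _ = (1 + (Nat.factorial m : ℝ≥0∞) * ENNReal.ofReal Λr ^ m) *
          volume (JNaux.Pset n c ℓ 0 0) := by ring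
    _ = ENNReal.ofReal ((1 + (Nat.factorial m : ℝ) * Λr ^ m) / C₀ ^ (p / 2) *
          C₀ ^ (p / 2) * ℓ ^ n) := by
        rw [hKC, hvol]
        rw [← ENNReal.ofReal_pow hΛrpos.le, ← ENNReal.ofReal_pow (by linarith : (0:ℝ) ≤ ℓ)]
        rw [show ((Nat.factorial m : ℝ≥0∞)) = ENNReal.ofReal (Nat.factorial m : ℝ) from
          (ENNReal.ofReal_natCast _).symm]
        rw [← ENNReal.ofReal_mul (by positivity), ← ENNReal.ofReal_one,
          ← ENNReal.ofReal_add (by norm_num) (by positivity),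
          ← ENNReal.ofReal_mul (by positivity)]
end

section
/- Let $F: \mathbb{R}^{n+1}_+ \to [0,\infty)$ be measurable and $\alpha > 1$. For a cube $Q \subset \mathbb{R}^n$ set $A_{Q,\alpha}(x) := \big( \int_0^{\ell(Q)} \int_{|x-y|<\alpha t} |F(y,t)|^2 \, \frac{dy\,dt}{t^{n+1}} \big)^{1/2}$ and $K_{\alpha} := \sup_{Q} \fint_Q A_{Q,\alpha}^2 \, dx$ (supremum over all cubes). Then $K_{\alpha} \le C(n,\alpha) K_{1}$. -/
open MeasureTheory Metric ENNReal

/-- The square of the local square function with aperture `α`, over the cube of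
center `c` and side length `ℓ` (cubes are sup-norm balls `ball c (ℓ/2)`). -/
noncomputable def apSqSq (n : ℕ) (F : (Fin n → ℝ) → ℝ → ℝ) (α ℓ : ℝ) (x : Fin n → ℝ) : ℝ≥0∞ :=
  ∫⁻ p in {p : (Fin n → ℝ) × ℝ | dist x p.1 < α * p.2 ∧ 0 < p.2 ∧ p.2 < ℓ},
    ENNReal.ofReal (F p.1 p.2 ^ 2 / p.2 ^ (n + 1))

lemma aux_fubini (n : ℕ) (F : (Fin n → ℝ) → ℝ → ℝ)
    (hF : Measurable (Function.uncurry F)) (α ℓ : ℝ) (c : Fin n → ℝ) :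
    ∫⁻ x in ball c (ℓ / 2), apSqSq n F α ℓ x
      = ∫⁻ p in {p : (Fin n → ℝ) × ℝ | 0 < p.2 ∧ p.2 < ℓ},
          ENNReal.ofReal (F p.1 p.2 ^ 2 / p.2 ^ (n + 1)) *
            volume (ball p.1 (α * p.2) ∩ ball c (ℓ / 2)) := by
  set g : (Fin n → ℝ) × ℝ → ℝ≥0∞ :=
    fun p => ENNReal.ofReal (F p.1 p.2 ^ 2 / p.2 ^ (n + 1)) with hgdef
  have hg : Measurable g := by
    apply Measurable.ennreal_ofReal
    exact (hF.pow_const 2).div (measurable_snd.pow_const (n + 1))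
  have hU : MeasurableSet {q : (Fin n → ℝ) × ((Fin n → ℝ) × ℝ) |
      dist q.1 q.2.1 < α * q.2.2 ∧ 0 < q.2.2 ∧ q.2.2 < ℓ} := by
    apply MeasurableSet.inter
    · exact measurableSet_lt (measurable_dist.comp
        (measurable_fst.prodMk (measurable_fst.comp measurable_snd)))
        ((measurable_snd.comp measurable_snd).const_mul α)
    · exact MeasurableSet.inter
        (measurableSet_lt measurable_const (measurable_snd.comp measurable_snd))
        (measurableSet_lt (measurable_snd.comp measurable_snd) measurable_const)
  set f : (Fin n → ℝ) → (Fin n → ℝ) × ℝ → ℝ≥0∞ := fun x p =>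
    Set.indicator {q : (Fin n → ℝ) × ((Fin n → ℝ) × ℝ) |
      dist q.1 q.2.1 < α * q.2.2 ∧ 0 < q.2.2 ∧ q.2.2 < ℓ} (fun q => g q.2) (x, p) with hfdef
  have hfm : Measurable (Function.uncurry f) := (hg.comp measurable_snd).indicator hU
  have step1 : ∀ x, apSqSq n F α ℓ x = ∫⁻ p, f x p := by
    intro x
    rw [apSqSq, ← lintegral_indicator]
    · exact lintegral_congr fun p => by
        simp [hfdef, hgdef, Set.indicator_apply, Set.mem_setOf_eq]
    · apply MeasurableSet.inter
      · exact measurableSet_lt (measurable_dist.comp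
          (measurable_const.prodMk measurable_fst)) (measurable_snd.const_mul α)
      · exact MeasurableSet.inter (measurableSet_lt measurable_const measurable_snd)
          (measurableSet_lt measurable_snd measurable_const)
  simp_rw [step1]
  rw [lintegral_lintegral_swap hfm.aemeasurable]
  have step2 : ∀ p : (Fin n → ℝ) × ℝ,
      ∫⁻ x in ball c (ℓ / 2), f x p
        = Set.indicator {p : (Fin n → ℝ) × ℝ | 0 < p.2 ∧ p.2 < ℓ}
            (fun p => g p * volume (ball p.1 (α * p.2) ∩ ball c (ℓ / 2))) p := by
    intro p
    by_cases ht : 0 < p.2 ∧ p.2 < ℓ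
    · have : ∀ x, f x p = Set.indicator (ball p.1 (α * p.2)) (fun _ => g p) x := by
        intro x
        by_cases h : dist x p.1 < α * p.2 <;>
          simp [hfdef, Set.indicator_apply, Set.mem_setOf_eq, mem_ball, ht.1, ht.2, h]
      simp_rw [this]
      rw [lintegral_indicator_const measurableSet_ball,
        Measure.restrict_apply measurableSet_ball,
        Set.indicator_of_mem (by exact ht)]
    · have : ∀ x, f x p = 0 := by
        intro x
        simp only [hfdef, Set.indicator_apply, Set.mem_setOf_eq]
        rw [if_neg]
        tauto
      simp only [this, lintegral_zero]
      simp only [Set.indicator_apply, Set.mem_setOf_eq, ht, if_false]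
  simp_rw [step2]
  rw [lintegral_indicator]
  exact (measurableSet_lt measurable_const measurable_snd).inter
    (measurableSet_lt measurable_snd measurable_const)

lemma aux_lower (n : ℕ) (c y : Fin n → ℝ) (t ℓ : ℝ) (ht : 0 < t) (htl : t < ℓ)
    (hy : dist y c < ℓ / 2) :
    ENNReal.ofReal (t ^ n) ≤ volume (ball y t ∩ ball c (ℓ / 2)) := by
  have hℓ : 0 < ℓ := ht.trans htl
  set z : Fin n → ℝ := y + (t / ℓ) • (c - y) with hz
  have hzy : dist z y = (t / ℓ) * dist y c := by
    rw [dist_eq_norm]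
    have : z - y = (t / ℓ) • (c - y) := by rw [hz]; abel
    rw [this, norm_smul, Real.norm_eq_abs, abs_of_pos (div_pos ht hℓ), ← dist_eq_norm,
      dist_comm c y]
  have hzc : dist z c = (1 - t / ℓ) * dist y c := by
    rw [dist_eq_norm]
    have : z - c = (1 - t / ℓ) • (y - c) := by
      rw [hz]; module
    rw [this, norm_smul, Real.norm_eq_abs,
      abs_of_nonneg (by rw [sub_nonneg]; exact (div_le_one hℓ).2 htl.le), ← dist_eq_norm]
  have hsub : ball z (t / 2) ⊆ ball y t ∩ ball c (ℓ / 2) := by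
    intro x hx
    rw [mem_ball] at hx
    constructor
    · rw [mem_ball]
      have h1 : dist z y ≤ t / 2 := by
        rw [hzy]
        calc (t / ℓ) * dist y c ≤ (t / ℓ) * (ℓ / 2) :=
          mul_le_mul_of_nonneg_left hy.le (div_pos ht hℓ).le
        _ = t / 2 := by field_simp
      calc dist x y ≤ dist x z + dist z y := dist_triangle x z y
      _ < t / 2 + t / 2 := by linarith
      _ = t := by ring
    · rw [mem_ball]
      have h1 : dist z c ≤ ℓ / 2 - t / 2 := by
        rw [hzc]
        calc (1 - t / ℓ) * dist y c ≤ (1 - t / ℓ) * (ℓ / 2) :=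
          mul_le_mul_of_nonneg_left hy.le (by rw [sub_nonneg]; exact (div_le_one hℓ).2 htl.le)
        _ = ℓ / 2 - t / 2 := by field_simp
      calc dist x c ≤ dist x z + dist z c := dist_triangle x z c
      _ < t / 2 + (ℓ / 2 - t / 2) := by linarith
      _ = ℓ / 2 := by ring
  calc ENNReal.ofReal (t ^ n) = volume (ball z (t / 2)) := by
        rw [Real.volume_pi_ball z (half_pos ht), Fintype.card_fin]
        congr 1
        ring
  _ ≤ volume (ball y t ∩ ball c (ℓ / 2)) := measure_mono hsub

lemma aux_cover (n : ℕ) (α ℓ : ℝ) (hα : 1 < α) (hℓ : 0 < ℓ) (c y : Fin n → ℝ)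
    (hy : dist y c < (α + 1 / 2) * ℓ) :
    ∃ k ∈ Fintype.piFinset (fun _ : Fin n => Finset.Icc (-(⌈2 * α⌉ + 2)) (⌈2 * α⌉ + 2)),
      dist y (fun j => c j + (ℓ / 2) * ((k j : ℤ) : ℝ)) < ℓ / 2 := by
  set k : Fin n → ℤ := fun j => round (2 * (y j - c j) / ℓ) with hk
  have hcoord : ∀ j, |2 * (y j - c j) / ℓ| < 2 * α + 1 := by
    intro j
    have h1 : |y j - c j| ≤ dist y c := by
      rw [← Real.dist_eq]; exact dist_le_pi_dist y c j
    rw [abs_div, abs_of_pos hℓ, div_lt_iff₀ hℓ, abs_mul]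
    have : |(2:ℝ)| = 2 := by norm_num
    rw [this]
    nlinarith [hy, abs_nonneg (y j - c j)]
  refine ⟨k, ?_, ?_⟩
  · rw [Fintype.mem_piFinset]
    intro j
    rw [Finset.mem_Icc]
    have h2 : |(k j : ℝ)| ≤ |2 * (y j - c j) / ℓ| + 1 / 2 := by
      have hr := abs_sub_round (2 * (y j - c j) / ℓ)
      have h3 : |(k j : ℝ)| ≤ |2 * (y j - c j) / ℓ| + |2 * (y j - c j) / ℓ - (k j : ℝ)| := by
        have h := abs_sub (2 * (y j - c j) / ℓ) (2 * (y j - c j) / ℓ - (k j : ℝ))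
        simpa using h
      linarith
    have h5 : |(k j : ℝ)| < 2 * α + 3 / 2 := lt_of_le_of_lt h2 (by linarith [hcoord j])
    have h6 : (2 : ℝ) * α ≤ (⌈2 * α⌉ : ℝ) := Int.le_ceil _
    have h7 : |(k j : ℝ)| < ((⌈2 * α⌉ + 2 : ℤ) : ℝ) := by push_cast; linarith
    rw [← Int.cast_abs] at h7
    have h8 : |k j| ≤ ⌈2 * α⌉ + 2 := by exact_mod_cast h7.le
    exact abs_le.1 h8
  · rw [dist_pi_lt_iff (half_pos hℓ)]
    intro j
    have hx : y j - (c j + (ℓ / 2) * ((k j : ℤ) : ℝ))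
        = (ℓ / 2) * (2 * (y j - c j) / ℓ - (k j : ℝ)) := by
      field_simp
      ring
    rw [Real.dist_eq, hx, abs_mul, abs_of_pos (half_pos hℓ)]
    have := abs_sub_round (2 * (y j - c j) / ℓ)
    calc (ℓ / 2) * |2 * (y j - c j) / ℓ - (k j : ℝ)| ≤ (ℓ / 2) * (1 / 2) :=
      mul_le_mul_of_nonneg_left this (half_pos hℓ).le
    _ < ℓ / 2 := by linarith

/-- Change of aperture for local square functions at the level of `L²` Carleson
averages: `K_α ≤ C(n,α) K_1`. -/
theorem stmt_4 (n : ℕ) (hn : 0 < n) (α : ℝ) (hα : 1 < α) :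
    ∃ C : ℝ, 0 < C ∧
      ∀ F : (Fin n → ℝ) → ℝ → ℝ, Measurable (Function.uncurry F) →
        (∀ y t, 0 ≤ F y t) →
      ∀ K : ℝ, 0 ≤ K →
        (∀ (c : Fin n → ℝ) (ℓ : ℝ), 0 < ℓ →
          ∫⁻ x in ball c (ℓ / 2), apSqSq n F 1 ℓ x ≤ ENNReal.ofReal (K * ℓ ^ n)) →
        ∀ (c : Fin n → ℝ) (ℓ : ℝ), 0 < ℓ →
          ∫⁻ x in ball c (ℓ / 2), apSqSq n F α ℓ x ≤ ENNReal.ofReal (C * K * ℓ ^ n) := by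
  classical
  have hα0 : (0:ℝ) < α := by linarith
  set S : Finset (Fin n → ℤ) :=
    Fintype.piFinset (fun _ : Fin n => Finset.Icc (-(⌈2 * α⌉ + 2)) (⌈2 * α⌉ + 2)) with hS
  have hScard : 0 < S.card := by
    refine Finset.card_pos.2 ⟨fun _ => 0, ?_⟩
    rw [hS, Fintype.mem_piFinset]
    intro j
    rw [Finset.mem_Icc]
    have : (0:ℤ) ≤ ⌈2 * α⌉ := by
      have : (0:ℝ) ≤ 2 * α := by linarith
      exact_mod_cast Int.ceil_nonneg (by linarith : (0:ℝ) ≤ 2*α)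
    omega
  refine ⟨(2 * α) ^ n * S.card, ?_, ?_⟩
  · apply _root_.mul_pos (pow_pos (by linarith) n)
    exact_mod_cast hScard
  intro F hF hF0 K hK hyp c ℓ hℓ
  set g : (Fin n → ℝ) × ℝ → ℝ≥0∞ :=
    fun p => ENNReal.ofReal (F p.1 p.2 ^ 2 / p.2 ^ (n + 1)) with hgdef
  have hg : Measurable g :=
    ((hF.pow_const 2).div (measurable_snd.pow_const (n + 1))).ennreal_ofReal
  set T : Set ((Fin n → ℝ) × ℝ) := {p | 0 < p.2 ∧ p.2 < ℓ} with hTdef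
  have hT : MeasurableSet T :=
    (measurableSet_lt measurable_const measurable_snd).inter
      (measurableSet_lt measurable_snd measurable_const)
  set ctr : (Fin n → ℤ) → (Fin n → ℝ) := fun k j => c j + (ℓ / 2) * ((k j : ℤ) : ℝ) with hctr
  set Qs : Set (Fin n → ℝ) := ball c ((α + 1 / 2) * ℓ) with hQs
  rw [aux_fubini n F hF α ℓ c]
  -- pointwise upper bound
  have hA : ∀ p ∈ T, g p * volume (ball p.1 (α * p.2) ∩ ball c (ℓ / 2))
      ≤ ENNReal.ofReal ((2 * α) ^ n) *
          (g p * ENNReal.ofReal (p.2 ^ n) * Qs.indicator 1 p.1) := by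
    intro p hp
    obtain ⟨hp1, hp2⟩ := hp
    by_cases hy : p.1 ∈ Qs
    · rw [Set.indicator_of_mem hy]
      simp only [Pi.one_apply, mul_one]
      calc g p * volume (ball p.1 (α * p.2) ∩ ball c (ℓ / 2))
          ≤ g p * volume (ball p.1 (α * p.2)) :=
            mul_le_mul_right (measure_mono Set.inter_subset_left) _
        _ = g p * ENNReal.ofReal ((2 * (α * p.2)) ^ n) := by
            rw [Real.volume_pi_ball _ (mul_pos hα0 hp1), Fintype.card_fin]
        _ = ENNReal.ofReal ((2 * α) ^ n) * (g p * ENNReal.ofReal (p.2 ^ n)) := by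
            rw [show (2 * (α * p.2)) ^ n = (2 * α) ^ n * p.2 ^ n by ring,
              ENNReal.ofReal_mul (by positivity)]
            ring
    · have hemp : ball p.1 (α * p.2) ∩ ball c (ℓ / 2) = ∅ := by
        rw [Set.eq_empty_iff_forall_notMem]
        rintro x ⟨hx1, hx2⟩
        rw [mem_ball] at hx1 hx2
        apply hy
        rw [hQs, mem_ball]
        have h1 : dist p.1 c ≤ dist p.1 x + dist x c := dist_triangle p.1 x c
        rw [dist_comm p.1 x] at h1
        have h2 : α * p.2 < α * ℓ := by exact mul_lt_mul_of_pos_left hp2 hα0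
        nlinarith
      rw [hemp]
      simp
  calc ∫⁻ p in T, g p * volume (ball p.1 (α * p.2) ∩ ball c (ℓ / 2))
      ≤ ∫⁻ p in T, ENNReal.ofReal ((2 * α) ^ n) *
          (g p * ENNReal.ofReal (p.2 ^ n) * Qs.indicator 1 p.1) :=
        setLIntegral_mono' hT hA
    _ = ENNReal.ofReal ((2 * α) ^ n) *
          ∫⁻ p in T, g p * ENNReal.ofReal (p.2 ^ n) * Qs.indicator 1 p.1 :=
        lintegral_const_mul' _ _ ofReal_ne_top
    _ ≤ ENNReal.ofReal ((2 * α) ^ n) *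
          ∫⁻ p in T, ∑ k ∈ S, (g p * ENNReal.ofReal (p.2 ^ n) *
            (ball (ctr k) (ℓ / 2)).indicator 1 p.1) := by
        refine mul_le_mul_right (setLIntegral_mono' hT fun p hp => ?_) _
        by_cases hy : p.1 ∈ Qs
        · obtain ⟨k, hkS, hk⟩ := aux_cover n α ℓ hα hℓ c p.1 (by rwa [hQs, mem_ball] at hy)
          calc g p * ENNReal.ofReal (p.2 ^ n) * Qs.indicator 1 p.1
              = g p * ENNReal.ofReal (p.2 ^ n) := by rw [Set.indicator_of_mem hy]; simp
            _ = g p * ENNReal.ofReal (p.2 ^ n) *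
                (ball (ctr k) (ℓ / 2)).indicator 1 p.1 := by
                rw [Set.indicator_of_mem (mem_ball.2 hk)]; simp
            _ ≤ _ := Finset.single_le_sum (f := fun k => g p * ENNReal.ofReal (p.2 ^ n) *
                (ball (ctr k) (ℓ / 2)).indicator 1 p.1) (fun k _ => zero_le) hkS
        · rw [Set.indicator_of_notMem hy, mul_zero]
          exact zero_le
    _ = ENNReal.ofReal ((2 * α) ^ n) *
          ∑ k ∈ S, ∫⁻ p in T, g p * ENNReal.ofReal (p.2 ^ n) *
            (ball (ctr k) (ℓ / 2)).indicator 1 p.1 := by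
        rw [lintegral_finset_sum]
        intro k _
        refine ((hg.mul ?_).mul ?_)
        · exact (measurable_snd.pow_const n).ennreal_ofReal
        · exact (measurable_const.indicator measurableSet_ball).comp measurable_fst
    _ ≤ ENNReal.ofReal ((2 * α) ^ n) * ∑ k ∈ S, ENNReal.ofReal (K * ℓ ^ n) := by
        refine mul_le_mul_right (Finset.sum_le_sum fun k _ => ?_) _
        have hbound := hyp (ctr k) ℓ hℓ
        rw [aux_fubini n F hF 1 ℓ (ctr k)] at hbound
        simp only [one_mul] at hbound
        refine le_trans (setLIntegral_mono' hT fun p hp => ?_) hbound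
        by_cases hy : p.1 ∈ ball (ctr k) (ℓ / 2)
        · rw [Set.indicator_of_mem hy]
          simp only [Pi.one_apply, mul_one]
          exact mul_le_mul_right
            (aux_lower n (ctr k) p.1 p.2 ℓ hp.1 hp.2 (mem_ball.1 hy)) _
        · rw [Set.indicator_of_notMem hy, mul_zero]
          exact zero_le
    _ ≤ ENNReal.ofReal ((2 * α) ^ n * S.card * K * ℓ ^ n) := by
        rw [Finset.sum_const, nsmul_eq_mul]
        rw [show ((S.card : ℝ≥0∞)) = ENNReal.ofReal (S.card : ℝ) by
          rw [ENNReal.ofReal_natCast]]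
        rw [← ENNReal.ofReal_mul (by positivity), ← ENNReal.ofReal_mul (by positivity)]
        apply le_of_eq
        congr 1
        ring
end
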